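/- arXiv:2602.08137 — 6 statements merged into one kernel-verified Lean document; each statement's English description precedes it below -/
import Mathlib

section
/- Let P be symmetric n×n, X symmetric positive definite n_p×n_p, V an invertible n×n matrix, M an n_u×n matrix, and set F := M·V⁻¹. Then the 5×5 block matrix LMI(P,X,V,M) equals Tᵀ·N·T, where T := diag(V, X, I_n, I_{n_p}, I_{n_e}) and N is the symmetric 5×5 block matrix [[V⁻ᵀ(V+Vᵀ−P)V⁻¹, 0, (A+B2·F)ᵀ, (C0+D02·F)ᵀ, (C1+D12·F)ᵀ],[0, X⁻¹, B0ᵀ, D00ᵀ, D10ᵀ],[A+B2·F, B0, P, 0, 0],[C0+D02·F, D00, 0, X, 0],[C1+D12·F, D10, 0, 0, I_{n_e}]]. Consequently LMI(P,X,V,M) is positive definite if and only if N is positive definite. -/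
open Matrix

/-- Concatenation of five column blocks. -/
def col5 {m c1 c2 c3 c4 c5 : Type*}
    (M1 : Matrix m c1 ℝ) (M2 : Matrix m c2 ℝ) (M3 : Matrix m c3 ℝ)
    (M4 : Matrix m c4 ℝ) (M5 : Matrix m c5 ℝ) :
    Matrix m (((c1 ⊕ c2) ⊕ (c3 ⊕ c4)) ⊕ c5) ℝ :=
  fromCols (fromCols (fromCols M1 M2) (fromCols M3 M4)) M5

/-- A `5 × 5` block matrix assembled from its twenty-five blocks. -/
def blk55 {r1 r2 r3 r4 r5 c1 c2 c3 c4 c5 : Type*}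
    (M11 : Matrix r1 c1 ℝ) (M12 : Matrix r1 c2 ℝ) (M13 : Matrix r1 c3 ℝ)
    (M14 : Matrix r1 c4 ℝ) (M15 : Matrix r1 c5 ℝ)
    (M21 : Matrix r2 c1 ℝ) (M22 : Matrix r2 c2 ℝ) (M23 : Matrix r2 c3 ℝ)
    (M24 : Matrix r2 c4 ℝ) (M25 : Matrix r2 c5 ℝ)
    (M31 : Matrix r3 c1 ℝ) (M32 : Matrix r3 c2 ℝ) (M33 : Matrix r3 c3 ℝ)
    (M34 : Matrix r3 c4 ℝ) (M35 : Matrix r3 c5 ℝ)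
    (M41 : Matrix r4 c1 ℝ) (M42 : Matrix r4 c2 ℝ) (M43 : Matrix r4 c3 ℝ)
    (M44 : Matrix r4 c4 ℝ) (M45 : Matrix r4 c5 ℝ)
    (M51 : Matrix r5 c1 ℝ) (M52 : Matrix r5 c2 ℝ) (M53 : Matrix r5 c3 ℝ)
    (M54 : Matrix r5 c4 ℝ) (M55 : Matrix r5 c5 ℝ) :
    Matrix (((r1 ⊕ r2) ⊕ (r3 ⊕ r4)) ⊕ r5) (((c1 ⊕ c2) ⊕ (c3 ⊕ c4)) ⊕ c5) ℝ :=
  fromRows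
    (fromRows (fromRows (col5 M11 M12 M13 M14 M15) (col5 M21 M22 M23 M24 M25))
      (fromRows (col5 M31 M32 M33 M34 M35) (col5 M41 M42 M43 M44 M45)))
    (col5 M51 M52 M53 M54 M55)

/-- The `5 × 5` block LMI matrix `LMI(P, X, V, M)` of the robust `H₂` state-feedback
synthesis (Theorem 1), for the plant data `A, B0, B2, C0, D00, D02, C1, D10, D12`. -/
def LMIsf {n np ne nu : ℕ}
    (A : Matrix (Fin n) (Fin n) ℝ) (B0 : Matrix (Fin n) (Fin np) ℝ)
    (B2 : Matrix (Fin n) (Fin nu) ℝ) (C0 : Matrix (Fin np) (Fin n) ℝ)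
    (D00 : Matrix (Fin np) (Fin np) ℝ) (D02 : Matrix (Fin np) (Fin nu) ℝ)
    (C1 : Matrix (Fin ne) (Fin n) ℝ) (D10 : Matrix (Fin ne) (Fin np) ℝ)
    (D12 : Matrix (Fin ne) (Fin nu) ℝ)
    (P : Matrix (Fin n) (Fin n) ℝ) (X : Matrix (Fin np) (Fin np) ℝ)
    (V : Matrix (Fin n) (Fin n) ℝ) (M : Matrix (Fin nu) (Fin n) ℝ) :
    Matrix (((Fin n ⊕ Fin np) ⊕ (Fin n ⊕ Fin np)) ⊕ Fin ne)
      (((Fin n ⊕ Fin np) ⊕ (Fin n ⊕ Fin np)) ⊕ Fin ne) ℝ :=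
  blk55
    (Vᵀ + V - P) 0 (A * V + B2 * M)ᵀ (C0 * V + D02 * M)ᵀ (C1 * V + D12 * M)ᵀ
    0 X (X * B0ᵀ) (X * D00ᵀ) (X * D10ᵀ)
    (A * V + B2 * M) (B0 * X) P 0 0
    (C0 * V + D02 * M) (D00 * X) 0 X 0
    (C1 * V + D12 * M) (D10 * X) 0 0 (1 : Matrix (Fin ne) (Fin ne) ℝ)

section
variable {r1 r2 r3 r4 r5 c1 c2 c3 c4 c5 k1 k2 k3 k4 k5 : Type*}
  [Fintype k1] [Fintype k2] [Fintype k3] [Fintype k4] [Fintype k5]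

lemma fromColumns_add' {m n₁ n₂ : Type*} (A C : Matrix m n₁ ℝ) (B D : Matrix m n₂ ℝ) :
    fromCols A B + fromCols C D = fromCols (A + C) (B + D) := by
  ext i (j|j) <;> simp [fromCols]

lemma blk55_mul
    (A11 : Matrix r1 k1 ℝ) (A12 : Matrix r1 k2 ℝ) (A13 : Matrix r1 k3 ℝ) (A14 : Matrix r1 k4 ℝ) (A15 : Matrix r1 k5 ℝ)
    (A21 : Matrix r2 k1 ℝ) (A22 : Matrix r2 k2 ℝ) (A23 : Matrix r2 k3 ℝ) (A24 : Matrix r2 k4 ℝ) (A25 : Matrix r2 k5 ℝ)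
    (A31 : Matrix r3 k1 ℝ) (A32 : Matrix r3 k2 ℝ) (A33 : Matrix r3 k3 ℝ) (A34 : Matrix r3 k4 ℝ) (A35 : Matrix r3 k5 ℝ)
    (A41 : Matrix r4 k1 ℝ) (A42 : Matrix r4 k2 ℝ) (A43 : Matrix r4 k3 ℝ) (A44 : Matrix r4 k4 ℝ) (A45 : Matrix r4 k5 ℝ)
    (A51 : Matrix r5 k1 ℝ) (A52 : Matrix r5 k2 ℝ) (A53 : Matrix r5 k3 ℝ) (A54 : Matrix r5 k4 ℝ) (A55 : Matrix r5 k5 ℝ)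
    (B11 : Matrix k1 c1 ℝ) (B12 : Matrix k1 c2 ℝ) (B13 : Matrix k1 c3 ℝ) (B14 : Matrix k1 c4 ℝ) (B15 : Matrix k1 c5 ℝ)
    (B21 : Matrix k2 c1 ℝ) (B22 : Matrix k2 c2 ℝ) (B23 : Matrix k2 c3 ℝ) (B24 : Matrix k2 c4 ℝ) (B25 : Matrix k2 c5 ℝ)
    (B31 : Matrix k3 c1 ℝ) (B32 : Matrix k3 c2 ℝ) (B33 : Matrix k3 c3 ℝ) (B34 : Matrix k3 c4 ℝ) (B35 : Matrix k3 c5 ℝ)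
    (B41 : Matrix k4 c1 ℝ) (B42 : Matrix k4 c2 ℝ) (B43 : Matrix k4 c3 ℝ) (B44 : Matrix k4 c4 ℝ) (B45 : Matrix k4 c5 ℝ)
    (B51 : Matrix k5 c1 ℝ) (B52 : Matrix k5 c2 ℝ) (B53 : Matrix k5 c3 ℝ) (B54 : Matrix k5 c4 ℝ) (B55 : Matrix k5 c5 ℝ) :
    blk55 A11 A12 A13 A14 A15 A21 A22 A23 A24 A25 A31 A32 A33 A34 A35 A41 A42 A43 A44 A45 A51 A52 A53 A54 A55 *
    blk55 B11 B12 B13 B14 B15 B21 B22 B23 B24 B25 B31 B32 B33 B34 B35 B41 B42 B43 B44 B45 B51 B52 B53 B54 B55 =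
    blk55
      (A11*B11+A12*B21+A13*B31+A14*B41+A15*B51) (A11*B12+A12*B22+A13*B32+A14*B42+A15*B52) (A11*B13+A12*B23+A13*B33+A14*B43+A15*B53) (A11*B14+A12*B24+A13*B34+A14*B44+A15*B54) (A11*B15+A12*B25+A13*B35+A14*B45+A15*B55)
      (A21*B11+A22*B21+A23*B31+A24*B41+A25*B51) (A21*B12+A22*B22+A23*B32+A24*B42+A25*B52) (A21*B13+A22*B23+A23*B33+A24*B43+A25*B53) (A21*B14+A22*B24+A23*B34+A24*B44+A25*B54) (A21*B15+A22*B25+A23*B35+A24*B45+A25*B55)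
      (A31*B11+A32*B21+A33*B31+A34*B41+A35*B51) (A31*B12+A32*B22+A33*B32+A34*B42+A35*B52) (A31*B13+A32*B23+A33*B33+A34*B43+A35*B53) (A31*B14+A32*B24+A33*B34+A34*B44+A35*B54) (A31*B15+A32*B25+A33*B35+A34*B45+A35*B55)
      (A41*B11+A42*B21+A43*B31+A44*B41+A45*B51) (A41*B12+A42*B22+A43*B32+A44*B42+A45*B52) (A41*B13+A42*B23+A43*B33+A44*B43+A45*B53) (A41*B14+A42*B24+A43*B34+A44*B44+A45*B54) (A41*B15+A42*B25+A43*B35+A44*B45+A45*B55)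
      (A51*B11+A52*B21+A53*B31+A54*B41+A55*B51) (A51*B12+A52*B22+A53*B32+A54*B42+A55*B52) (A51*B13+A52*B23+A53*B33+A54*B43+A55*B53) (A51*B14+A52*B24+A53*B34+A54*B44+A55*B54) (A51*B15+A52*B25+A53*B35+A54*B45+A55*B55) := by
  simp only [blk55, col5, fromRows_mul, fromCols_mul_fromRows, mul_fromCols,
    fromColumns_add', fromRows_ext_iff, fromCols_ext_iff]
  and_intros <;> abel
end

lemma blk55_transpose {r1 r2 r3 r4 r5 c1 c2 c3 c4 c5 : Type*}
    (M11 : Matrix r1 c1 ℝ) (M12 : Matrix r1 c2 ℝ) (M13 : Matrix r1 c3 ℝ)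
    (M14 : Matrix r1 c4 ℝ) (M15 : Matrix r1 c5 ℝ)
    (M21 : Matrix r2 c1 ℝ) (M22 : Matrix r2 c2 ℝ) (M23 : Matrix r2 c3 ℝ)
    (M24 : Matrix r2 c4 ℝ) (M25 : Matrix r2 c5 ℝ)
    (M31 : Matrix r3 c1 ℝ) (M32 : Matrix r3 c2 ℝ) (M33 : Matrix r3 c3 ℝ)
    (M34 : Matrix r3 c4 ℝ) (M35 : Matrix r3 c5 ℝ)
    (M41 : Matrix r4 c1 ℝ) (M42 : Matrix r4 c2 ℝ) (M43 : Matrix r4 c3 ℝ)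
    (M44 : Matrix r4 c4 ℝ) (M45 : Matrix r4 c5 ℝ)
    (M51 : Matrix r5 c1 ℝ) (M52 : Matrix r5 c2 ℝ) (M53 : Matrix r5 c3 ℝ)
    (M54 : Matrix r5 c4 ℝ) (M55 : Matrix r5 c5 ℝ) :
    (blk55 M11 M12 M13 M14 M15 M21 M22 M23 M24 M25 M31 M32 M33 M34 M35
      M41 M42 M43 M44 M45 M51 M52 M53 M54 M55)ᵀ =
    blk55 M11ᵀ M21ᵀ M31ᵀ M41ᵀ M51ᵀ M12ᵀ M22ᵀ M32ᵀ M42ᵀ M52ᵀ M13ᵀ M23ᵀ M33ᵀ M43ᵀ M53ᵀ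
      M14ᵀ M24ᵀ M34ᵀ M44ᵀ M54ᵀ M15ᵀ M25ᵀ M35ᵀ M45ᵀ M55ᵀ := by
  ext (((i|i)|(i|i))|i) (((j|j)|(j|j))|j) <;>
    simp [blk55, col5]

lemma blk55_one {r1 r2 r3 r4 r5 : Type*}
    [DecidableEq r1] [DecidableEq r2] [DecidableEq r3] [DecidableEq r4] [DecidableEq r5] :
    blk55 (1 : Matrix r1 r1 ℝ) 0 0 0 0
      0 (1 : Matrix r2 r2 ℝ) 0 0 0
      0 0 (1 : Matrix r3 r3 ℝ) 0 0
      0 0 0 (1 : Matrix r4 r4 ℝ) 0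
      0 0 0 0 (1 : Matrix r5 r5 ℝ) = 1 := by
  ext (((i|i)|(i|i))|i) (((j|j)|(j|j))|j) <;>
    simp [blk55, col5, one_apply]

lemma posDef_conj {k : Type*} [Fintype k] [DecidableEq k] {N T : Matrix k k ℝ}
    (hN : N.PosDef) (hT : IsUnit T) : (Tᵀ * N * T).PosDef := by
  refine PosDef.of_dotProduct_mulVec_pos ?_ ?_
  · have := isHermitian_conjTranspose_mul_mul T hN.1
    rwa [conjTranspose_eq_transpose_of_trivial] at this
  · intro x hx
    have hx' : T *ᵥ x ≠ 0 := by
      intro h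
      exact hx (mulVec_injective_iff_isUnit.mpr hT (by simpa using h))
    have := hN.dotProduct_mulVec_pos hx'
    simpa only [star_trivial, ← mulVec_mulVec, dotProduct_mulVec, vecMul_transpose]
      using this

/-- With `T := diag(V, X, I, I, I)` and
`N := [[V⁻ᵀ(V+Vᵀ−P)V⁻¹, 0, (A+B₂F)ᵀ, (C₀+D₀₂F)ᵀ, (C₁+D₁₂F)ᵀ], [0, X⁻¹, B₀ᵀ, D₀₀ᵀ, D₁₀ᵀ],
[A+B₂F, B₀, P, 0, 0], [C₀+D₀₂F, D₀₀, 0, X, 0], [C₁+D₁₂F, D₁₀, 0, 0, I]]` where `F := M·V⁻¹`,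
we have `LMI(P,X,V,M) = Tᵀ · N · T`; consequently `LMI(P,X,V,M)` is positive definite iff `N`
is positive definite. -/
theorem statement3 {n np ne nu : ℕ}
    (A : Matrix (Fin n) (Fin n) ℝ) (B0 : Matrix (Fin n) (Fin np) ℝ)
    (B2 : Matrix (Fin n) (Fin nu) ℝ) (C0 : Matrix (Fin np) (Fin n) ℝ)
    (D00 : Matrix (Fin np) (Fin np) ℝ) (D02 : Matrix (Fin np) (Fin nu) ℝ)
    (C1 : Matrix (Fin ne) (Fin n) ℝ) (D10 : Matrix (Fin ne) (Fin np) ℝ)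
    (D12 : Matrix (Fin ne) (Fin nu) ℝ)
    (P : Matrix (Fin n) (Fin n) ℝ) (X : Matrix (Fin np) (Fin np) ℝ)
    (V : Matrix (Fin n) (Fin n) ℝ) (M : Matrix (Fin nu) (Fin n) ℝ)
    (hP : P.IsHermitian) (hX : X.PosDef) (hV : IsUnit V) :
    LMIsf A B0 B2 C0 D00 D02 C1 D10 D12 P X V M =
      (blk55 V 0 0 0 0
        0 X 0 0 0
        0 0 (1 : Matrix (Fin n) (Fin n) ℝ) 0 0
        0 0 0 (1 : Matrix (Fin np) (Fin np) ℝ) 0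
        0 0 0 0 (1 : Matrix (Fin ne) (Fin ne) ℝ))ᵀ *
      (blk55
        ((V⁻¹)ᵀ * (V + Vᵀ - P) * V⁻¹) 0 (A + B2 * (M * V⁻¹))ᵀ (C0 + D02 * (M * V⁻¹))ᵀ
          (C1 + D12 * (M * V⁻¹))ᵀ
        0 X⁻¹ B0ᵀ D00ᵀ D10ᵀ
        (A + B2 * (M * V⁻¹)) B0 P 0 0
        (C0 + D02 * (M * V⁻¹)) D00 0 X 0
        (C1 + D12 * (M * V⁻¹)) D10 0 0 (1 : Matrix (Fin ne) (Fin ne) ℝ)) *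
      (blk55 V 0 0 0 0
        0 X 0 0 0
        0 0 (1 : Matrix (Fin n) (Fin n) ℝ) 0 0
        0 0 0 (1 : Matrix (Fin np) (Fin np) ℝ) 0
        0 0 0 0 (1 : Matrix (Fin ne) (Fin ne) ℝ)) ∧
    ((LMIsf A B0 B2 C0 D00 D02 C1 D10 D12 P X V M).PosDef ↔
      (blk55
        ((V⁻¹)ᵀ * (V + Vᵀ - P) * V⁻¹) 0 (A + B2 * (M * V⁻¹))ᵀ (C0 + D02 * (M * V⁻¹))ᵀ
          (C1 + D12 * (M * V⁻¹))ᵀ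
        0 X⁻¹ B0ᵀ D00ᵀ D10ᵀ
        (A + B2 * (M * V⁻¹)) B0 P 0 0
        (C0 + D02 * (M * V⁻¹)) D00 0 X 0
        (C1 + D12 * (M * V⁻¹)) D10 0 0 (1 : Matrix (Fin ne) (Fin ne) ℝ)).PosDef) := by
  
  classical
  have hVd : IsUnit V.det := (Matrix.isUnit_iff_isUnit_det V).mp hV
  have hXu : IsUnit X := hX.isUnit
  have hXd : IsUnit X.det := (Matrix.isUnit_iff_isUnit_det X).mp hXu
  have hXT : Xᵀ = X := (conjTranspose_eq_transpose_of_trivial X).symm.trans hX.1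
  have hVV : V⁻¹ * V = 1 := nonsing_inv_mul V hVd
  have hVV' : V * V⁻¹ = 1 := mul_nonsing_inv V hVd
  have hXX : X⁻¹ * X = 1 := nonsing_inv_mul X hXd
  have hXX' : X * X⁻¹ = 1 := mul_nonsing_inv X hXd
  have hVl : ∀ (m' : Type) (S : Matrix (Fin n) m' ℝ), Vᵀ * ((V⁻¹)ᵀ * S) = S := by
    intro m' S
    rw [← Matrix.mul_assoc, ← transpose_mul, hVV, transpose_one, Matrix.one_mul]
  have hVl' : ∀ (m' : Type) (S : Matrix (Fin n) m' ℝ), Vᵀ * ((Vᵀ)⁻¹ * S) = S := by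
    intro m' S
    rw [← Matrix.mul_assoc, mul_nonsing_inv Vᵀ (by simpa using hVd), Matrix.one_mul]
  have key : LMIsf A B0 B2 C0 D00 D02 C1 D10 D12 P X V M =
      (blk55 V 0 0 0 0
        0 X 0 0 0
        0 0 (1 : Matrix (Fin n) (Fin n) ℝ) 0 0
        0 0 0 (1 : Matrix (Fin np) (Fin np) ℝ) 0
        0 0 0 0 (1 : Matrix (Fin ne) (Fin ne) ℝ))ᵀ *
      (blk55
        ((V⁻¹)ᵀ * (V + Vᵀ - P) * V⁻¹) 0 (A + B2 * (M * V⁻¹))ᵀ (C0 + D02 * (M * V⁻¹))ᵀ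
          (C1 + D12 * (M * V⁻¹))ᵀ
        0 X⁻¹ B0ᵀ D00ᵀ D10ᵀ
        (A + B2 * (M * V⁻¹)) B0 P 0 0
        (C0 + D02 * (M * V⁻¹)) D00 0 X 0
        (C1 + D12 * (M * V⁻¹)) D10 0 0 (1 : Matrix (Fin ne) (Fin ne) ℝ)) *
      (blk55 V 0 0 0 0
        0 X 0 0 0
        0 0 (1 : Matrix (Fin n) (Fin n) ℝ) 0 0
        0 0 0 (1 : Matrix (Fin np) (Fin np) ℝ) 0
        0 0 0 0 (1 : Matrix (Fin ne) (Fin ne) ℝ)) := by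
    rw [blk55_transpose, blk55_mul, blk55_mul, LMIsf]
    simp only [transpose_zero, transpose_one, hXT, Matrix.mul_zero, Matrix.zero_mul,
      Matrix.mul_one, Matrix.one_mul, add_zero, zero_add, Matrix.mul_assoc, hVV, hXX,
      hVl, hVl', transpose_add, transpose_mul, transpose_nonsing_inv, Matrix.mul_add,
      Matrix.add_mul]
    rw [add_comm Vᵀ V]
  refine ⟨key, ?_⟩
  set Tm := (blk55 V 0 0 0 0
        0 X 0 0 0
        0 0 (1 : Matrix (Fin n) (Fin n) ℝ) 0 0
        0 0 0 (1 : Matrix (Fin np) (Fin np) ℝ) 0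
        0 0 0 0 (1 : Matrix (Fin ne) (Fin ne) ℝ)) with hTm
  set Ti := (blk55 V⁻¹ 0 0 0 0
        0 X⁻¹ 0 0 0
        0 0 (1 : Matrix (Fin n) (Fin n) ℝ) 0 0
        0 0 0 (1 : Matrix (Fin np) (Fin np) ℝ) 0
        0 0 0 0 (1 : Matrix (Fin ne) (Fin ne) ℝ)) with hTi
  set Nm := (blk55
        ((V⁻¹)ᵀ * (V + Vᵀ - P) * V⁻¹) 0 (A + B2 * (M * V⁻¹))ᵀ (C0 + D02 * (M * V⁻¹))ᵀ
          (C1 + D12 * (M * V⁻¹))ᵀ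
        0 X⁻¹ B0ᵀ D00ᵀ D10ᵀ
        (A + B2 * (M * V⁻¹)) B0 P 0 0
        (C0 + D02 * (M * V⁻¹)) D00 0 X 0
        (C1 + D12 * (M * V⁻¹)) D10 0 0 (1 : Matrix (Fin ne) (Fin ne) ℝ)) with hNm
  have h1 : Tm * Ti = 1 := by
    rw [hTm, hTi, blk55_mul]
    simp only [Matrix.mul_zero, Matrix.zero_mul, Matrix.mul_one, Matrix.one_mul,
      add_zero, zero_add, hVV', hXX']
    exact blk55_one
  have h2 : Ti * Tm = 1 := by
    rw [hTm, hTi, blk55_mul]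
    simp only [Matrix.mul_zero, Matrix.zero_mul, Matrix.mul_one, Matrix.one_mul,
      add_zero, zero_add, hVV, hXX]
    exact blk55_one
  have hTu : IsUnit Tm := ⟨⟨Tm, Ti, h1, h2⟩, rfl⟩
  have hTiu : IsUnit Ti := ⟨⟨Ti, Tm, h2, h1⟩, rfl⟩
  constructor
  · intro h
    rw [key] at h
    have h' := posDef_conj h hTiu
    have hN2 : Tiᵀ * (Tmᵀ * Nm * Tm) * Ti = Nm := by
      rw [show Tiᵀ * (Tmᵀ * Nm * Tm) * Ti = (Tiᵀ * Tmᵀ) * (Nm * (Tm * Ti)) by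
        simp only [Matrix.mul_assoc], ← transpose_mul, h1, transpose_one,
        Matrix.one_mul, Matrix.mul_one]
    rwa [hN2] at h'
  · intro h
    rw [key]
    exact posDef_conj h hTu
end

section
/- Let P (n×n) and X (n_p×n_p) be symmetric positive definite, and suppose V (n×n) and M (n_u×n) are such that the block matrix LMI(P,X,V,M) is positive definite. Then V is invertible and, with F := M·V⁻¹, the symmetric 5×5 block matrix [[P⁻¹, 0, (A+B2·F)ᵀ, (C0+D02·F)ᵀ, (C1+D12·F)ᵀ],[0, X⁻¹, B0ᵀ, D00ᵀ, D10ᵀ],[A+B2·F, B0, P, 0, 0],[C0+D02·F, D00, 0, X, 0],[C1+D12·F, D10, 0, 0, I_{n_e}]] is positive definite. -/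
open Matrix

/-- Block-diagonal `5 × 5` block matrix. -/
def dg5 {a1 a2 a3 a4 a5 b1 b2 b3 b4 b5 : Type*}
    (D1 : Matrix a1 b1 ℝ) (D2 : Matrix a2 b2 ℝ) (D3 : Matrix a3 b3 ℝ)
    (D4 : Matrix a4 b4 ℝ) (D5 : Matrix a5 b5 ℝ) :
    Matrix (((a1 ⊕ a2) ⊕ (a3 ⊕ a4)) ⊕ a5) (((b1 ⊕ b2) ⊕ (b3 ⊕ b4)) ⊕ b5) ℝ :=
  blk55 D1 0 0 0 0
    0 D2 0 0 0
    0 0 D3 0 0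
    0 0 0 D4 0
    0 0 0 0 D5

lemma dg5_transpose {a1 a2 a3 a4 a5 b1 b2 b3 b4 b5 : Type*}
    (D1 : Matrix a1 b1 ℝ) (D2 : Matrix a2 b2 ℝ) (D3 : Matrix a3 b3 ℝ)
    (D4 : Matrix a4 b4 ℝ) (D5 : Matrix a5 b5 ℝ) :
    (dg5 D1 D2 D3 D4 D5)ᵀ = dg5 D1ᵀ D2ᵀ D3ᵀ D4ᵀ D5ᵀ := by
  ext i j
  obtain (((i|i)|(i|i))|i) := i <;> obtain (((j|j)|(j|j))|j) := j <;>
    simp [dg5, blk55, col5, Matrix.fromRows_apply_inl, Matrix.fromRows_apply_inr, Matrix.fromCols_apply_inl, Matrix.fromCols_apply_inr]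

lemma dg5_one {a1 a2 a3 a4 a5 : Type*}
    [DecidableEq a1] [DecidableEq a2] [DecidableEq a3] [DecidableEq a4] [DecidableEq a5] :
    dg5 (1 : Matrix a1 a1 ℝ) (1 : Matrix a2 a2 ℝ) (1 : Matrix a3 a3 ℝ)
      (1 : Matrix a4 a4 ℝ) (1 : Matrix a5 a5 ℝ) = 1 := by
  ext i j
  obtain (((i|i)|(i|i))|i) := i <;> obtain (((j|j)|(j|j))|j) := j <;>
    simp [dg5, blk55, col5, Matrix.fromRows_apply_inl, Matrix.fromRows_apply_inr, Matrix.fromCols_apply_inl, Matrix.fromCols_apply_inr, Matrix.one_apply]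

lemma col5_conj {n a1 a2 a3 a4 a5 : Type*} [Fintype n]
    (W : Matrix n a1 ℝ) (Q : Matrix n n ℝ) :
    (col5 W (0 : Matrix n a2 ℝ) (0 : Matrix n a3 ℝ) (0 : Matrix n a4 ℝ)
        (0 : Matrix n a5 ℝ))ᵀ * Q *
      col5 W (0 : Matrix n a2 ℝ) (0 : Matrix n a3 ℝ) (0 : Matrix n a4 ℝ) (0 : Matrix n a5 ℝ) =
    dg5 (Wᵀ * Q * W) 0 0 0 0 := by
  ext i j
  obtain (((i|i)|(i|i))|i) := i <;> obtain (((j|j)|(j|j))|j) := j <;>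
    simp [dg5, blk55, col5, Matrix.fromRows_apply_inl, Matrix.fromRows_apply_inr, Matrix.fromCols_apply_inl, Matrix.fromCols_apply_inr, Matrix.mul_apply,
      Finset.sum_mul, Finset.mul_sum]

lemma posDef_transpose_mul_mul {k : Type*} [Fintype k] [DecidableEq k]
    {A : Matrix k k ℝ} (hA : A.PosDef) (B : Matrix k k ℝ) (hB : IsUnit B) :
    (Bᵀ * A * B).PosDef := by
  rw [← conjTranspose_eq_transpose_of_trivial]
  refine PosDef.of_dotProduct_mulVec_pos (isHermitian_conjTranspose_mul_mul B hA.1) (fun x hx => ?_)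
  have hne : B *ᵥ x ≠ 0 := by
    intro h0
    exact hx (Matrix.mulVec_injective_iff_isUnit.mpr hB (by simpa using h0))
  simpa only [star_mulVec, dotProduct_mulVec, vecMul_vecMul] using hA.dotProduct_mulVec_pos hne
lemma dg5_mul_blk55 {a1 a2 a3 a4 a5 b1 b2 b3 b4 b5 c1 c2 c3 c4 c5 : Type*}
    [Fintype b1] [Fintype b2] [Fintype b3] [Fintype b4] [Fintype b5]
    (D1 : Matrix a1 b1 ℝ) (D2 : Matrix a2 b2 ℝ) (D3 : Matrix a3 b3 ℝ)
    (D4 : Matrix a4 b4 ℝ) (D5 : Matrix a5 b5 ℝ)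
    (B11 : Matrix b1 c1 ℝ) (B12 : Matrix b1 c2 ℝ) (B13 : Matrix b1 c3 ℝ) (B14 : Matrix b1 c4 ℝ) (B15 : Matrix b1 c5 ℝ)
    (B21 : Matrix b2 c1 ℝ) (B22 : Matrix b2 c2 ℝ) (B23 : Matrix b2 c3 ℝ) (B24 : Matrix b2 c4 ℝ) (B25 : Matrix b2 c5 ℝ)
    (B31 : Matrix b3 c1 ℝ) (B32 : Matrix b3 c2 ℝ) (B33 : Matrix b3 c3 ℝ) (B34 : Matrix b3 c4 ℝ) (B35 : Matrix b3 c5 ℝ)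
    (B41 : Matrix b4 c1 ℝ) (B42 : Matrix b4 c2 ℝ) (B43 : Matrix b4 c3 ℝ) (B44 : Matrix b4 c4 ℝ) (B45 : Matrix b4 c5 ℝ)
    (B51 : Matrix b5 c1 ℝ) (B52 : Matrix b5 c2 ℝ) (B53 : Matrix b5 c3 ℝ) (B54 : Matrix b5 c4 ℝ) (B55 : Matrix b5 c5 ℝ)
 :
    dg5 D1 D2 D3 D4 D5 * blk55 B11 B12 B13 B14 B15
    B21 B22 B23 B24 B25
    B31 B32 B33 B34 B35
    B41 B42 B43 B44 B45
    B51 B52 B53 B54 B55 =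
    blk55 (D1 * B11) (D1 * B12) (D1 * B13) (D1 * B14) (D1 * B15)
    (D2 * B21) (D2 * B22) (D2 * B23) (D2 * B24) (D2 * B25)
    (D3 * B31) (D3 * B32) (D3 * B33) (D3 * B34) (D3 * B35)
    (D4 * B41) (D4 * B42) (D4 * B43) (D4 * B44) (D4 * B45)
    (D5 * B51) (D5 * B52) (D5 * B53) (D5 * B54) (D5 * B55) := by
  ext i j
  obtain (((i|i)|(i|i))|i) := i <;> obtain (((j|j)|(j|j))|j) := j <;>
    simp only [dg5, blk55, col5, Matrix.mul_apply, Matrix.fromRows_apply_inl, Matrix.fromRows_apply_inr, Matrix.fromCols_apply_inl, Matrix.fromCols_apply_inr,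
      Matrix.of_apply, Sum.elim_inl, Sum.elim_inr, Fintype.sum_sum_type, Matrix.zero_apply,
      zero_mul, mul_zero, Finset.sum_const_zero, add_zero, zero_add]

lemma blk55_mul_dg5 {a1 a2 a3 a4 a5 b1 b2 b3 b4 b5 c1 c2 c3 c4 c5 : Type*}
    [Fintype b1] [Fintype b2] [Fintype b3] [Fintype b4] [Fintype b5]
    (A11 : Matrix a1 b1 ℝ) (A12 : Matrix a1 b2 ℝ) (A13 : Matrix a1 b3 ℝ) (A14 : Matrix a1 b4 ℝ) (A15 : Matrix a1 b5 ℝ)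
    (A21 : Matrix a2 b1 ℝ) (A22 : Matrix a2 b2 ℝ) (A23 : Matrix a2 b3 ℝ) (A24 : Matrix a2 b4 ℝ) (A25 : Matrix a2 b5 ℝ)
    (A31 : Matrix a3 b1 ℝ) (A32 : Matrix a3 b2 ℝ) (A33 : Matrix a3 b3 ℝ) (A34 : Matrix a3 b4 ℝ) (A35 : Matrix a3 b5 ℝ)
    (A41 : Matrix a4 b1 ℝ) (A42 : Matrix a4 b2 ℝ) (A43 : Matrix a4 b3 ℝ) (A44 : Matrix a4 b4 ℝ) (A45 : Matrix a4 b5 ℝ)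
    (A51 : Matrix a5 b1 ℝ) (A52 : Matrix a5 b2 ℝ) (A53 : Matrix a5 b3 ℝ) (A54 : Matrix a5 b4 ℝ) (A55 : Matrix a5 b5 ℝ)
    (D1 : Matrix b1 c1 ℝ) (D2 : Matrix b2 c2 ℝ) (D3 : Matrix b3 c3 ℝ)
    (D4 : Matrix b4 c4 ℝ) (D5 : Matrix b5 c5 ℝ) :
    blk55 A11 A12 A13 A14 A15
    A21 A22 A23 A24 A25
    A31 A32 A33 A34 A35
    A41 A42 A43 A44 A45
    A51 A52 A53 A54 A55 * dg5 D1 D2 D3 D4 D5 =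
    blk55 (A11 * D1) (A12 * D2) (A13 * D3) (A14 * D4) (A15 * D5)
    (A21 * D1) (A22 * D2) (A23 * D3) (A24 * D4) (A25 * D5)
    (A31 * D1) (A32 * D2) (A33 * D3) (A34 * D4) (A35 * D5)
    (A41 * D1) (A42 * D2) (A43 * D3) (A44 * D4) (A45 * D5)
    (A51 * D1) (A52 * D2) (A53 * D3) (A54 * D4) (A55 * D5) := by
  ext i j
  obtain (((i|i)|(i|i))|i) := i <;> obtain (((j|j)|(j|j))|j) := j <;>
    simp only [dg5, blk55, col5, Matrix.mul_apply, Matrix.fromRows_apply_inl, Matrix.fromRows_apply_inr, Matrix.fromCols_apply_inl, Matrix.fromCols_apply_inr,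
      Matrix.of_apply, Sum.elim_inl, Sum.elim_inr, Fintype.sum_sum_type, Matrix.zero_apply,
      zero_mul, mul_zero, Finset.sum_const_zero, add_zero, zero_add]

lemma blk55_add {a1 a2 a3 a4 a5 c1 c2 c3 c4 c5 : Type*}
    (A11 : Matrix a1 c1 ℝ) (A12 : Matrix a1 c2 ℝ) (A13 : Matrix a1 c3 ℝ) (A14 : Matrix a1 c4 ℝ) (A15 : Matrix a1 c5 ℝ)
    (A21 : Matrix a2 c1 ℝ) (A22 : Matrix a2 c2 ℝ) (A23 : Matrix a2 c3 ℝ) (A24 : Matrix a2 c4 ℝ) (A25 : Matrix a2 c5 ℝ)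
    (A31 : Matrix a3 c1 ℝ) (A32 : Matrix a3 c2 ℝ) (A33 : Matrix a3 c3 ℝ) (A34 : Matrix a3 c4 ℝ) (A35 : Matrix a3 c5 ℝ)
    (A41 : Matrix a4 c1 ℝ) (A42 : Matrix a4 c2 ℝ) (A43 : Matrix a4 c3 ℝ) (A44 : Matrix a4 c4 ℝ) (A45 : Matrix a4 c5 ℝ)
    (A51 : Matrix a5 c1 ℝ) (A52 : Matrix a5 c2 ℝ) (A53 : Matrix a5 c3 ℝ) (A54 : Matrix a5 c4 ℝ) (A55 : Matrix a5 c5 ℝ)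
    (B11 : Matrix a1 c1 ℝ) (B12 : Matrix a1 c2 ℝ) (B13 : Matrix a1 c3 ℝ) (B14 : Matrix a1 c4 ℝ) (B15 : Matrix a1 c5 ℝ)
    (B21 : Matrix a2 c1 ℝ) (B22 : Matrix a2 c2 ℝ) (B23 : Matrix a2 c3 ℝ) (B24 : Matrix a2 c4 ℝ) (B25 : Matrix a2 c5 ℝ)
    (B31 : Matrix a3 c1 ℝ) (B32 : Matrix a3 c2 ℝ) (B33 : Matrix a3 c3 ℝ) (B34 : Matrix a3 c4 ℝ) (B35 : Matrix a3 c5 ℝ)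
    (B41 : Matrix a4 c1 ℝ) (B42 : Matrix a4 c2 ℝ) (B43 : Matrix a4 c3 ℝ) (B44 : Matrix a4 c4 ℝ) (B45 : Matrix a4 c5 ℝ)
    (B51 : Matrix a5 c1 ℝ) (B52 : Matrix a5 c2 ℝ) (B53 : Matrix a5 c3 ℝ) (B54 : Matrix a5 c4 ℝ) (B55 : Matrix a5 c5 ℝ)
 :
    blk55 A11 A12 A13 A14 A15
    A21 A22 A23 A24 A25
    A31 A32 A33 A34 A35
    A41 A42 A43 A44 A45
    A51 A52 A53 A54 A55 +
    blk55 B11 B12 B13 B14 B15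
    B21 B22 B23 B24 B25
    B31 B32 B33 B34 B35
    B41 B42 B43 B44 B45
    B51 B52 B53 B54 B55 =
    blk55 (A11 + B11) (A12 + B12) (A13 + B13) (A14 + B14) (A15 + B15)
    (A21 + B21) (A22 + B22) (A23 + B23) (A24 + B24) (A25 + B25)
    (A31 + B31) (A32 + B32) (A33 + B33) (A34 + B34) (A35 + B35)
    (A41 + B41) (A42 + B42) (A43 + B43) (A44 + B44) (A45 + B45)
    (A51 + B51) (A52 + B52) (A53 + B53) (A54 + B54) (A55 + B55) := by
  ext i j
  obtain (((i|i)|(i|i))|i) := i <;> obtain (((j|j)|(j|j))|j) := j <;>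
    simp [blk55, col5, Matrix.fromRows_apply_inl, Matrix.fromRows_apply_inr, Matrix.fromCols_apply_inl, Matrix.fromCols_apply_inr]

lemma blk55_quad_inl {a1 a2 a3 a4 a5 : Type*}
    [Fintype a1] [Fintype a2] [Fintype a3] [Fintype a4] [Fintype a5]
    (M11 : Matrix a1 a1 ℝ) (M12 : Matrix a1 a2 ℝ) (M13 : Matrix a1 a3 ℝ) (M14 : Matrix a1 a4 ℝ) (M15 : Matrix a1 a5 ℝ)
    (M21 : Matrix a2 a1 ℝ) (M22 : Matrix a2 a2 ℝ) (M23 : Matrix a2 a3 ℝ) (M24 : Matrix a2 a4 ℝ) (M25 : Matrix a2 a5 ℝ)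
    (M31 : Matrix a3 a1 ℝ) (M32 : Matrix a3 a2 ℝ) (M33 : Matrix a3 a3 ℝ) (M34 : Matrix a3 a4 ℝ) (M35 : Matrix a3 a5 ℝ)
    (M41 : Matrix a4 a1 ℝ) (M42 : Matrix a4 a2 ℝ) (M43 : Matrix a4 a3 ℝ) (M44 : Matrix a4 a4 ℝ) (M45 : Matrix a4 a5 ℝ)
    (M51 : Matrix a5 a1 ℝ) (M52 : Matrix a5 a2 ℝ) (M53 : Matrix a5 a3 ℝ) (M54 : Matrix a5 a4 ℝ) (M55 : Matrix a5 a5 ℝ)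
    (x : a1 → ℝ) :
    (Sum.elim (Sum.elim (Sum.elim x 0) 0) 0) ⬝ᵥ
      (blk55 M11 M12 M13 M14 M15
    M21 M22 M23 M24 M25
    M31 M32 M33 M34 M35
    M41 M42 M43 M44 M45
    M51 M52 M53 M54 M55 *ᵥ
        (Sum.elim (Sum.elim (Sum.elim x 0) 0) 0)) = x ⬝ᵥ (M11 *ᵥ x) := by
  simp [blk55, col5, Matrix.fromRows_apply_inl, Matrix.fromRows_apply_inr, Matrix.fromCols_apply_inl, Matrix.fromCols_apply_inr, Matrix.mulVec, dotProduct,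
    Fintype.sum_sum_type]

lemma dg5_mul_dg5 {a1 a2 a3 a4 a5 b1 b2 b3 b4 b5 c1 c2 c3 c4 c5 : Type*}
    [Fintype b1] [Fintype b2] [Fintype b3] [Fintype b4] [Fintype b5]
    (D1 : Matrix a1 b1 ℝ) (D2 : Matrix a2 b2 ℝ) (D3 : Matrix a3 b3 ℝ)
    (D4 : Matrix a4 b4 ℝ) (D5 : Matrix a5 b5 ℝ)
    (E1 : Matrix b1 c1 ℝ) (E2 : Matrix b2 c2 ℝ) (E3 : Matrix b3 c3 ℝ)
    (E4 : Matrix b4 c4 ℝ) (E5 : Matrix b5 c5 ℝ) :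
    dg5 D1 D2 D3 D4 D5 * dg5 E1 E2 E3 E4 E5 =
      dg5 (D1 * E1) (D2 * E2) (D3 * E3) (D4 * E4) (D5 * E5) := by
  ext i j
  obtain (((i|i)|(i|i))|i) := i <;> obtain (((j|j)|(j|j))|j) := j <;>
    simp only [dg5, blk55, col5, Matrix.mul_apply, Matrix.fromRows_apply_inl, Matrix.fromRows_apply_inr, Matrix.fromCols_apply_inl, Matrix.fromCols_apply_inr,
      Matrix.of_apply, Sum.elim_inl, Sum.elim_inr, Fintype.sum_sum_type, Matrix.zero_apply,
      zero_mul, mul_zero, Finset.sum_const_zero, add_zero, zero_add]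

/-- If `P`, `X` are symmetric positive definite and `LMI(P,X,V,M)` is positive definite, then
`V` is invertible and, with `F := M·V⁻¹`, the block matrix
`[[P⁻¹, 0, (A+B₂F)ᵀ, (C₀+D₀₂F)ᵀ, (C₁+D₁₂F)ᵀ], [0, X⁻¹, B₀ᵀ, D₀₀ᵀ, D₁₀ᵀ], [A+B₂F, B₀, P, 0, 0],
[C₀+D₀₂F, D₀₀, 0, X, 0], [C₁+D₁₂F, D₁₀, 0, 0, I]]` is positive definite. -/
theorem statement4 {n np ne nu : ℕ}
    (A : Matrix (Fin n) (Fin n) ℝ) (B0 : Matrix (Fin n) (Fin np) ℝ)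
    (B2 : Matrix (Fin n) (Fin nu) ℝ) (C0 : Matrix (Fin np) (Fin n) ℝ)
    (D00 : Matrix (Fin np) (Fin np) ℝ) (D02 : Matrix (Fin np) (Fin nu) ℝ)
    (C1 : Matrix (Fin ne) (Fin n) ℝ) (D10 : Matrix (Fin ne) (Fin np) ℝ)
    (D12 : Matrix (Fin ne) (Fin nu) ℝ)
    (P : Matrix (Fin n) (Fin n) ℝ) (X : Matrix (Fin np) (Fin np) ℝ)
    (V : Matrix (Fin n) (Fin n) ℝ) (M : Matrix (Fin nu) (Fin n) ℝ)
    (hP : P.PosDef) (hX : X.PosDef)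
    (h : (LMIsf A B0 B2 C0 D00 D02 C1 D10 D12 P X V M).PosDef) :
    IsUnit V ∧
    (blk55
      P⁻¹ 0 (A + B2 * (M * V⁻¹))ᵀ (C0 + D02 * (M * V⁻¹))ᵀ (C1 + D12 * (M * V⁻¹))ᵀ
      0 X⁻¹ B0ᵀ D00ᵀ D10ᵀ
      (A + B2 * (M * V⁻¹)) B0 P 0 0
      (C0 + D02 * (M * V⁻¹)) D00 0 X 0
      (C1 + D12 * (M * V⁻¹)) D10 0 0 (1 : Matrix (Fin ne) (Fin ne) ℝ)).PosDef := by
  -- Step 1: `V` is invertible.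
  have hV : IsUnit V := by
    by_contra hnV
    have hdet : V.det = 0 := by
      by_contra hd
      exact hnV ((Matrix.isUnit_iff_isUnit_det V).mpr (isUnit_iff_ne_zero.mpr hd))
    obtain ⟨x, hx0, hVx⟩ := (Matrix.exists_mulVec_eq_zero_iff).mpr hdet
    have hz : (Sum.elim (Sum.elim (Sum.elim x 0) 0) 0 :
        (((Fin n ⊕ Fin np) ⊕ (Fin n ⊕ Fin np)) ⊕ Fin ne) → ℝ) ≠ 0 := by
      obtain ⟨i, hi⟩ := Function.ne_iff.mp hx0
      intro h0
      exact hi (by simpa using congrFun h0 (Sum.inl (Sum.inl (Sum.inl i))))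
    have hq := h.dotProduct_mulVec_pos hz
    rw [show (star (Sum.elim (Sum.elim (Sum.elim x 0) 0) 0 :
        (((Fin n ⊕ Fin np) ⊕ (Fin n ⊕ Fin np)) ⊕ Fin ne) → ℝ)) =
        Sum.elim (Sum.elim (Sum.elim x 0) 0) 0 from star_trivial _, LMIsf,
      blk55_quad_inl] at hq
    have h1 : x ⬝ᵥ (Vᵀ *ᵥ x) = 0 := by
      rw [dotProduct_mulVec, vecMul_transpose, hVx, zero_dotProduct]
    have h2 : x ⬝ᵥ (V *ᵥ x) = 0 := by rw [hVx, dotProduct_zero]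
    rw [sub_mulVec, add_mulVec, dotProduct_sub, dotProduct_add, h1, h2] at hq
    have hq' := hP.dotProduct_mulVec_pos hx0
    rw [show star x = x from star_trivial x] at hq'
    simp only [zero_add, zero_sub] at hq
    linarith
  have hVd : IsUnit V.det := (Matrix.isUnit_iff_isUnit_det V).mp hV
  have hVtd : IsUnit Vᵀ.det := by rwa [Matrix.det_transpose]
  have hPd : IsUnit P.det := (Matrix.isUnit_iff_isUnit_det P).mp hP.isUnit
  have hXd : IsUnit X.det := (Matrix.isUnit_iff_isUnit_det X).mp hX.isUnit
  have hPs : Pᵀ = P := (Matrix.conjTranspose_eq_transpose_of_trivial P).symm.trans hP.isHermitian.eq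
  have hXs : Xᵀ = X := (Matrix.conjTranspose_eq_transpose_of_trivial X).symm.trans hX.isHermitian.eq
  -- the completion-of-squares identity
  have key : (Vᵀ + V - P) + (V - P)ᵀ * P⁻¹ * (V - P) = Vᵀ * P⁻¹ * V := by
    have e1 : (V - P)ᵀ * P⁻¹ * (V - P) = Vᵀ * P⁻¹ * V - Vᵀ - (V - P) := by
      rw [Matrix.transpose_sub, hPs, Matrix.sub_mul, Matrix.mul_nonsing_inv P hPd,
        Matrix.sub_mul, Matrix.mul_sub, Matrix.mul_sub, Matrix.one_mul,
        Matrix.mul_assoc Vᵀ P⁻¹ P, Matrix.nonsing_inv_mul P hPd, Matrix.mul_one]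
      simp only [Matrix.one_mul]
    rw [e1]
    abel
  -- the error term is positive semidefinite
  have hE : (dg5 ((V - P)ᵀ * P⁻¹ * (V - P)) (0 : Matrix (Fin np) (Fin np) ℝ)
      (0 : Matrix (Fin n) (Fin n) ℝ) (0 : Matrix (Fin np) (Fin np) ℝ)
      (0 : Matrix (Fin ne) (Fin ne) ℝ)).PosSemidef := by
    rw [← col5_conj]
    have hps := (hP.inv.posSemidef).conjTranspose_mul_mul_same
      (col5 (V - P) (0 : Matrix (Fin n) (Fin np) ℝ) (0 : Matrix (Fin n) (Fin n) ℝ)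
        (0 : Matrix (Fin n) (Fin np) ℝ) (0 : Matrix (Fin n) (Fin ne) ℝ))
    rwa [Matrix.conjTranspose_eq_transpose_of_trivial] at hps
  -- the shifted LMI matrix
  have hL'eq : LMIsf A B0 B2 C0 D00 D02 C1 D10 D12 P X V M +
      dg5 ((V - P)ᵀ * P⁻¹ * (V - P)) (0 : Matrix (Fin np) (Fin np) ℝ)
        (0 : Matrix (Fin n) (Fin n) ℝ) (0 : Matrix (Fin np) (Fin np) ℝ)
        (0 : Matrix (Fin ne) (Fin ne) ℝ) =
      blk55 (Vᵀ * P⁻¹ * V) 0 (A * V + B2 * M)ᵀ (C0 * V + D02 * M)ᵀ (C1 * V + D12 * M)ᵀ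
        0 X (X * B0ᵀ) (X * D00ᵀ) (X * D10ᵀ)
        (A * V + B2 * M) (B0 * X) P 0 0
        (C0 * V + D02 * M) (D00 * X) 0 X 0
        (C1 * V + D12 * M) (D10 * X) 0 0 (1 : Matrix (Fin ne) (Fin ne) ℝ) := by
    rw [LMIsf, dg5, blk55_add, key]
    simp only [add_zero, zero_add]
  have hL' : (blk55 (Vᵀ * P⁻¹ * V) 0 (A * V + B2 * M)ᵀ (C0 * V + D02 * M)ᵀ (C1 * V + D12 * M)ᵀ
        0 X (X * B0ᵀ) (X * D00ᵀ) (X * D10ᵀ)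
        (A * V + B2 * M) (B0 * X) P 0 0
        (C0 * V + D02 * M) (D00 * X) 0 X 0
        (C1 * V + D12 * M) (D10 * X) 0 0 (1 : Matrix (Fin ne) (Fin ne) ℝ)).PosDef := by
    rw [← hL'eq]
    exact h.add_posSemidef hE
  -- the congruence matrix is invertible
  have hG1 : dg5 V⁻¹ X⁻¹ (1 : Matrix (Fin n) (Fin n) ℝ) (1 : Matrix (Fin np) (Fin np) ℝ)
        (1 : Matrix (Fin ne) (Fin ne) ℝ) *
      dg5 V X (1 : Matrix (Fin n) (Fin n) ℝ) (1 : Matrix (Fin np) (Fin np) ℝ)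
        (1 : Matrix (Fin ne) (Fin ne) ℝ) = 1 := by
    rw [dg5_mul_dg5, Matrix.nonsing_inv_mul V hVd, Matrix.nonsing_inv_mul X hXd]
    simp only [Matrix.one_mul]
    exact dg5_one
  have hG2 : dg5 V X (1 : Matrix (Fin n) (Fin n) ℝ) (1 : Matrix (Fin np) (Fin np) ℝ)
        (1 : Matrix (Fin ne) (Fin ne) ℝ) *
      dg5 V⁻¹ X⁻¹ (1 : Matrix (Fin n) (Fin n) ℝ) (1 : Matrix (Fin np) (Fin np) ℝ)
        (1 : Matrix (Fin ne) (Fin ne) ℝ) = 1 := by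
    rw [dg5_mul_dg5, Matrix.mul_nonsing_inv V hVd, Matrix.mul_nonsing_inv X hXd]
    simp only [Matrix.one_mul]
    exact dg5_one
  have hGu : IsUnit (dg5 V⁻¹ X⁻¹ (1 : Matrix (Fin n) (Fin n) ℝ)
      (1 : Matrix (Fin np) (Fin np) ℝ) (1 : Matrix (Fin ne) (Fin ne) ℝ)) :=
    ⟨⟨_, _, hG1, hG2⟩, rfl⟩
  -- block-level cancellation identities
  have hSV : (A * V + B2 * M) * V⁻¹ = A + B2 * (M * V⁻¹) := by
    rw [Matrix.add_mul, Matrix.mul_nonsing_inv_cancel_right V A hVd, Matrix.mul_assoc]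
  have hSC0 : (C0 * V + D02 * M) * V⁻¹ = C0 + D02 * (M * V⁻¹) := by
    rw [Matrix.add_mul, Matrix.mul_nonsing_inv_cancel_right V C0 hVd, Matrix.mul_assoc]
  have hSC1 : (C1 * V + D12 * M) * V⁻¹ = C1 + D12 * (M * V⁻¹) := by
    rw [Matrix.add_mul, Matrix.mul_nonsing_inv_cancel_right V C1 hVd, Matrix.mul_assoc]
  have hT0 : Vᵀ⁻¹ * (A * V + B2 * M)ᵀ = (A + B2 * (M * V⁻¹))ᵀ := by
    rw [← Matrix.transpose_nonsing_inv, ← Matrix.transpose_mul, hSV]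
  have hT1 : Vᵀ⁻¹ * (C0 * V + D02 * M)ᵀ = (C0 + D02 * (M * V⁻¹))ᵀ := by
    rw [← Matrix.transpose_nonsing_inv, ← Matrix.transpose_mul, hSC0]
  have hT2 : Vᵀ⁻¹ * (C1 * V + D12 * M)ᵀ = (C1 + D12 * (M * V⁻¹))ᵀ := by
    rw [← Matrix.transpose_nonsing_inv, ← Matrix.transpose_mul, hSC1]
  have hPP : Vᵀ⁻¹ * (Vᵀ * P⁻¹ * V) * V⁻¹ = P⁻¹ := by
    rw [Matrix.mul_assoc Vᵀ P⁻¹ V, Matrix.nonsing_inv_mul_cancel_left Vᵀ _ hVtd,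
      Matrix.mul_nonsing_inv_cancel_right V P⁻¹ hVd]
  have hXX : X⁻¹ * X * X⁻¹ = X⁻¹ := by
    rw [Matrix.nonsing_inv_mul X hXd, Matrix.one_mul]
  have hXB0 : X⁻¹ * (X * B0ᵀ) = B0ᵀ := Matrix.nonsing_inv_mul_cancel_left X B0ᵀ hXd
  have hXD00 : X⁻¹ * (X * D00ᵀ) = D00ᵀ := Matrix.nonsing_inv_mul_cancel_left X D00ᵀ hXd
  have hXD10 : X⁻¹ * (X * D10ᵀ) = D10ᵀ := Matrix.nonsing_inv_mul_cancel_left X D10ᵀ hXd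
  have hB0X : B0 * X * X⁻¹ = B0 := Matrix.mul_nonsing_inv_cancel_right X B0 hXd
  have hD00X : D00 * X * X⁻¹ = D00 := Matrix.mul_nonsing_inv_cancel_right X D00 hXd
  have hD10X : D10 * X * X⁻¹ = D10 := Matrix.mul_nonsing_inv_cancel_right X D10 hXd
  -- the congruence identity
  have hmain : (blk55
      P⁻¹ 0 (A + B2 * (M * V⁻¹))ᵀ (C0 + D02 * (M * V⁻¹))ᵀ (C1 + D12 * (M * V⁻¹))ᵀ
      0 X⁻¹ B0ᵀ D00ᵀ D10ᵀ
      (A + B2 * (M * V⁻¹)) B0 P 0 0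
      (C0 + D02 * (M * V⁻¹)) D00 0 X 0
      (C1 + D12 * (M * V⁻¹)) D10 0 0 (1 : Matrix (Fin ne) (Fin ne) ℝ)) =
      (dg5 V⁻¹ X⁻¹ (1 : Matrix (Fin n) (Fin n) ℝ) (1 : Matrix (Fin np) (Fin np) ℝ)
        (1 : Matrix (Fin ne) (Fin ne) ℝ))ᵀ *
      blk55 (Vᵀ * P⁻¹ * V) 0 (A * V + B2 * M)ᵀ (C0 * V + D02 * M)ᵀ (C1 * V + D12 * M)ᵀ
        0 X (X * B0ᵀ) (X * D00ᵀ) (X * D10ᵀ)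
        (A * V + B2 * M) (B0 * X) P 0 0
        (C0 * V + D02 * M) (D00 * X) 0 X 0
        (C1 * V + D12 * M) (D10 * X) 0 0 (1 : Matrix (Fin ne) (Fin ne) ℝ) *
      dg5 V⁻¹ X⁻¹ (1 : Matrix (Fin n) (Fin n) ℝ) (1 : Matrix (Fin np) (Fin np) ℝ)
        (1 : Matrix (Fin ne) (Fin ne) ℝ) := by
    rw [dg5_transpose, Matrix.transpose_one, dg5_mul_blk55, blk55_mul_dg5]
    simp only [Matrix.transpose_one, Matrix.transpose_nonsing_inv, hXs, Matrix.mul_zero, Matrix.zero_mul,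
      Matrix.mul_one, Matrix.one_mul, hPP, hT0, hT1, hT2, hSV, hSC0, hSC1, hXX,
      hXB0, hXD00, hXD10, hB0X, hD00X, hD10X]
  refine ⟨hV, ?_⟩
  rw [hmain]
  exact posDef_transpose_mul_mul hL' _ hGu
end

section
/- (Theorem 1, robust H₂ state-feedback synthesis.) Suppose there exist symmetric positive definite matrices P₋, P₊ (n×n), Q (n_d×n_d), X (n_p×n_p), and matrices M (n_u×n), V (n×n) such that LMI(P₊,X,V,M) ≻ 0, LMI(P₋,X,V,M) ≻ 0, the block matrix [[Q, B1ᵀ],[B1, P₊ − P₋]] ≻ 0, and tr(Q) < γ². Then V is invertible and, setting F := M·V⁻¹, A_F := A + B2·F, C0F := C0 + D02·F, C1F := C1 + D12·F, the closed-loop state-space robust H₂ analysis conditions hold: for each P ∈ {P₋, P₊}, the matrix diag(P, X, I_{n_e}) − [[A_F, B0],[C0F, D00],[C1F, D10]]·diag(P, X)·[[A_F, B0],[C0F, D00],[C1F, D10]]ᵀ is positive definite, and moreover [[Q, B1ᵀ],[B1, P₊ − P₋]] ≻ 0 and tr(Q) < γ². -/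
open Matrix

section Aux
open Matrix

lemma dpT {m k : Type*} [Fintype m] [Fintype k] (B : Matrix m k ℝ) (a : m → ℝ) (b : k → ℝ) :
    a ⬝ᵥ (B *ᵥ b) = (Bᵀ *ᵥ a) ⬝ᵥ b := by
  rw [Matrix.dotProduct_mulVec, Matrix.mulVec_transpose]

lemma aux_key {n np ne nu : ℕ}
    (A : Matrix (Fin n) (Fin n) ℝ) (B0 : Matrix (Fin n) (Fin np) ℝ)
    (B2 : Matrix (Fin n) (Fin nu) ℝ) (C0 : Matrix (Fin np) (Fin n) ℝ)
    (D00 : Matrix (Fin np) (Fin np) ℝ) (D02 : Matrix (Fin np) (Fin nu) ℝ)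
    (C1 : Matrix (Fin ne) (Fin n) ℝ) (D10 : Matrix (Fin ne) (Fin np) ℝ)
    (D12 : Matrix (Fin ne) (Fin nu) ℝ)
    (P : Matrix (Fin n) (Fin n) ℝ) (X : Matrix (Fin np) (Fin np) ℝ)
    (V : Matrix (Fin n) (Fin n) ℝ) (M : Matrix (Fin nu) (Fin n) ℝ)
    (hP : P.PosDef) (hXs : Xᵀ = X) (hV : IsUnit V.det)
    (h : (LMIsf A B0 B2 C0 D00 D02 C1 D10 D12 P X V M).PosDef) :
    (fromBlocks (fromBlocks P 0 0 X) 0 0 (1 : Matrix (Fin ne) (Fin ne) ℝ) -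
      fromRows (fromBlocks (A + B2 * (M * V⁻¹)) B0 (C0 + D02 * (M * V⁻¹)) D00)
          (fromCols (C1 + D12 * (M * V⁻¹)) D10) *
        fromBlocks P 0 0 X *
        (fromRows (fromBlocks (A + B2 * (M * V⁻¹)) B0 (C0 + D02 * (M * V⁻¹)) D00)
          (fromCols (C1 + D12 * (M * V⁻¹)) D10))ᵀ).PosDef := by
  have hPs : Pᵀ = P := by
    rw [← Matrix.conjTranspose_eq_transpose_of_trivial]; exact hP.1
  have hFV : M * V⁻¹ * V = M := Matrix.nonsing_inv_mul_cancel_right V M hV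
  set AF := A + B2 * (M * V⁻¹) with hAF
  set CF0 := C0 + D02 * (M * V⁻¹) with hCF0
  set CF1 := C1 + D12 * (M * V⁻¹) with hCF1
  have hAV : A * V + B2 * M = AF * V := by
    rw [hAF, Matrix.add_mul, Matrix.mul_assoc, hFV]
  have hC0V : C0 * V + D02 * M = CF0 * V := by
    rw [hCF0, Matrix.add_mul, Matrix.mul_assoc, hFV]
  have hC1V : C1 * V + D12 * M = CF1 * V := by
    rw [hCF1, Matrix.add_mul, Matrix.mul_assoc, hFV]
  simp only [LMIsf, hAV, hC0V, hC1V] at h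
  refine Matrix.posDef_iff_dotProduct_mulVec.2 ⟨?_, ?_⟩
  · rw [Matrix.IsHermitian, Matrix.conjTranspose_eq_transpose_of_trivial]
    simp [Matrix.transpose_sub, Matrix.transpose_mul, Matrix.fromBlocks_transpose,
      Matrix.transpose_fromRows, Matrix.transpose_fromCols, hPs, hXs, Matrix.mul_assoc]
  · intro x hx
    set x₁ : Fin n → ℝ := fun i => x (Sum.inl (Sum.inl i)) with hx1
    set x₂ : Fin np → ℝ := fun i => x (Sum.inl (Sum.inr i)) with hx2
    set x₃ : Fin ne → ℝ := fun i => x (Sum.inr i) with hx3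
    have hxe : x = Sum.elim (Sum.elim x₁ x₂) x₃ := by
      funext i; rcases i with (i | i) | i <;> rfl
    set w₁ : Fin n → ℝ := AFᵀ *ᵥ x₁ + CF0ᵀ *ᵥ x₂ + CF1ᵀ *ᵥ x₃ with hw1
    set w₂ : Fin np → ℝ := B0ᵀ *ᵥ x₁ + D00ᵀ *ᵥ x₂ + D10ᵀ *ᵥ x₃ with hw2
    set z₁ : Fin n → ℝ := -(V⁻¹ *ᵥ (P *ᵥ w₁)) with hz1
    have hVz : V *ᵥ z₁ = -(P *ᵥ w₁) := by
      rw [hz1, Matrix.mulVec_neg, Matrix.mulVec_mulVec,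
        Matrix.mul_nonsing_inv V hV, Matrix.one_mulVec]
    set z : (((Fin n ⊕ Fin np) ⊕ (Fin n ⊕ Fin np)) ⊕ Fin ne) → ℝ :=
      Sum.elim (Sum.elim (Sum.elim z₁ (-w₂)) (Sum.elim x₁ x₂)) x₃ with hzdef
    have hz : z ≠ 0 := by
      intro h0
      apply hx
      funext i
      rcases i with (i | i) | i
      · exact congrFun h0 (Sum.inl (Sum.inr (Sum.inl i)))
      · exact congrFun h0 (Sum.inl (Sum.inr (Sum.inr i)))
      · exact congrFun h0 (Sum.inr i)
    have hq := h.dotProduct_mulVec_pos hz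
    have hstar : star z = z := by funext i; exact star_trivial _
    rw [hstar] at hq
    have hsemi := hP.posSemidef.dotProduct_mulVec_nonneg (w₁ + z₁)
    rw [show star (w₁ + z₁) = w₁ + z₁ from funext fun i => star_trivial _] at hsemi
    have hstarx : star x = x := by funext i; exact star_trivial _
    rw [hstarx, hxe]
    simp only [blk55, col5, hzdef, Matrix.fromRows_mulVec,
      Matrix.fromCols_mulVec_sumElim, sumElim_dotProduct_sumElim,
      Matrix.zero_mulVec, Matrix.one_mulVec, dotProduct_add, add_dotProduct,
      dotProduct_zero, zero_dotProduct, add_zero, zero_add] at hq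
    have comp_add : ∀ {α β : Type} (u v : α → ℝ) (f : β → α), (u + v) ∘ f = u ∘ f + v ∘ f :=
      fun u v f => rfl
    have dpT' : ∀ {m k : Type} [Fintype m] [Fintype k] (B : Matrix k m ℝ) (a : m → ℝ) (b : k → ℝ),
        a ⬝ᵥ (Bᵀ *ᵥ b) = (B *ᵥ a) ⬝ᵥ b := by
      intro m k _ _ B a b; rw [dpT, Matrix.transpose_transpose]
    simp only [Matrix.sub_mulVec, dotProduct_sub, Matrix.transpose_fromRows,
      Matrix.transpose_fromCols, Matrix.fromBlocks_transpose, ← Matrix.mulVec_mulVec,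
      Matrix.fromRows_mulVec, Matrix.fromCols_mulVec_sumElim, Matrix.fromBlocks_mulVec,
      Sum.elim_comp_inl, Sum.elim_comp_inr, comp_add, sumElim_dotProduct_sumElim,
      Matrix.zero_mulVec, Matrix.one_mulVec, dotProduct_add, add_dotProduct,
      dotProduct_zero, zero_dotProduct, add_zero, zero_add, Matrix.mulVec_add,
      Matrix.mulVec_zero]
    have eAF : ∀ s, x₁ ⬝ᵥ AF *ᵥ s = (AFᵀ *ᵥ x₁) ⬝ᵥ s := fun s => dpT AF x₁ s
    have eB0 : ∀ s, x₁ ⬝ᵥ B0 *ᵥ s = (B0ᵀ *ᵥ x₁) ⬝ᵥ s := fun s => dpT B0 x₁ s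
    have eCF0 : ∀ s, x₂ ⬝ᵥ CF0 *ᵥ s = (CF0ᵀ *ᵥ x₂) ⬝ᵥ s := fun s => dpT CF0 x₂ s
    have eD00 : ∀ s, x₂ ⬝ᵥ D00 *ᵥ s = (D00ᵀ *ᵥ x₂) ⬝ᵥ s := fun s => dpT D00 x₂ s
    have eCF1 : ∀ s, x₃ ⬝ᵥ CF1 *ᵥ s = (CF1ᵀ *ᵥ x₃) ⬝ᵥ s := fun s => dpT CF1 x₃ s
    have eD10 : ∀ s, x₃ ⬝ᵥ D10 *ᵥ s = (D10ᵀ *ᵥ x₃) ⬝ᵥ s := fun s => dpT D10 x₃ s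
    have dpT' : ∀ {m : Type} [Fintype m] (B : Matrix m (Fin n) ℝ) (a : Fin n → ℝ) (b : m → ℝ),
        a ⬝ᵥ (Bᵀ *ᵥ b) = (B *ᵥ a) ⬝ᵥ b := by
      intro m _ B a b; rw [dpT, Matrix.transpose_transpose]
    have sP : ∀ (a b : Fin n → ℝ), a ⬝ᵥ P *ᵥ b = b ⬝ᵥ P *ᵥ a := by
      intro a b; rw [dpT, hPs, dotProduct_comm]
    have sX : ∀ (a b : Fin np → ℝ), a ⬝ᵥ X *ᵥ b = b ⬝ᵥ X *ᵥ a := by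
      intro a b; rw [dpT, hXs, dotProduct_comm]
    simp only [Matrix.transpose_mul, Matrix.add_mulVec, Matrix.sub_mulVec,
      ← Matrix.mulVec_mulVec, dotProduct_add, dotProduct_sub,
      neg_dotProduct, dotProduct_neg, Matrix.mulVec_neg, neg_neg] at hq
    simp only [dpT'] at hq
    simp only [hVz, neg_dotProduct, dotProduct_neg, Matrix.mulVec_neg,
      neg_neg] at hq
    simp only [eAF, eB0, eCF0, eCF1, eD00, eD10] at hq ⊢
    simp only [hw1, hw2, Matrix.mulVec_add, dotProduct_add, add_dotProduct,
      dotProduct_neg, neg_dotProduct, neg_neg] at hq hsemi ⊢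
    have cP : ∀ (a b : Fin n → ℝ), (P *ᵥ a) ⬝ᵥ b = b ⬝ᵥ (P *ᵥ a) :=
      fun a b => dotProduct_comm _ _
    have cAF : ∀ s, (AF *ᵥ s) ⬝ᵥ x₁ = (AFᵀ *ᵥ x₁) ⬝ᵥ s :=
      fun s => by rw [dotProduct_comm, eAF]
    have cCF0 : ∀ s, (CF0 *ᵥ s) ⬝ᵥ x₂ = (CF0ᵀ *ᵥ x₂) ⬝ᵥ s :=
      fun s => by rw [dotProduct_comm, eCF0]
    have cCF1 : ∀ s, (CF1 *ᵥ s) ⬝ᵥ x₃ = (CF1ᵀ *ᵥ x₃) ⬝ᵥ s :=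
      fun s => by rw [dotProduct_comm, eCF1]
    simp only [cAF, cCF0, cCF1, cP] at hq
    linarith [hq, hsemi,
      sP (AFᵀ *ᵥ x₁) z₁, sP (CF0ᵀ *ᵥ x₂) z₁, sP (CF1ᵀ *ᵥ x₃) z₁,
      sP (AFᵀ *ᵥ x₁) (CF0ᵀ *ᵥ x₂), sP (AFᵀ *ᵥ x₁) (CF1ᵀ *ᵥ x₃),
      sP (CF0ᵀ *ᵥ x₂) (CF1ᵀ *ᵥ x₃),
      sX (B0ᵀ *ᵥ x₁) (D00ᵀ *ᵥ x₂), sX (B0ᵀ *ᵥ x₁) (D10ᵀ *ᵥ x₃),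
      sX (D00ᵀ *ᵥ x₂) (D10ᵀ *ᵥ x₃)]


/-- Theorem 1 (robust `H₂` state-feedback synthesis).  If there exist symmetric positive
definite `P₋, P₊, Q, X` and matrices `M, V` with `LMI(P₊,X,V,M) ≻ 0`, `LMI(P₋,X,V,M) ≻ 0`,
`[[Q, B₁ᵀ],[B₁, P₊ − P₋]] ≻ 0` and `tr(Q) < γ²`, then `V` is invertible and, with
`F := M·V⁻¹`, `A_F := A + B₂F`, `C₀F := C₀ + D₀₂F`, `C₁F := C₁ + D₁₂F`, the closed-loop
robust `H₂` analysis conditions hold for both `P₋` and `P₊`, together with the coupling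
condition and the trace bound. -/
theorem statement6 {n np nd ne nu : ℕ}
    (A : Matrix (Fin n) (Fin n) ℝ) (B0 : Matrix (Fin n) (Fin np) ℝ)
    (B1 : Matrix (Fin n) (Fin nd) ℝ) (B2 : Matrix (Fin n) (Fin nu) ℝ)
    (C0 : Matrix (Fin np) (Fin n) ℝ) (D00 : Matrix (Fin np) (Fin np) ℝ)
    (D02 : Matrix (Fin np) (Fin nu) ℝ)
    (C1 : Matrix (Fin ne) (Fin n) ℝ) (D10 : Matrix (Fin ne) (Fin np) ℝ)
    (D12 : Matrix (Fin ne) (Fin nu) ℝ)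
    (Pm Pp : Matrix (Fin n) (Fin n) ℝ) (Q : Matrix (Fin nd) (Fin nd) ℝ)
    (X : Matrix (Fin np) (Fin np) ℝ)
    (M : Matrix (Fin nu) (Fin n) ℝ) (V : Matrix (Fin n) (Fin n) ℝ) (γ : ℝ)
    (hγ : 0 < γ) (hPm : Pm.PosDef) (hPp : Pp.PosDef) (hQ : Q.PosDef) (hX : X.PosDef)
    (hp : (LMIsf A B0 B2 C0 D00 D02 C1 D10 D12 Pp X V M).PosDef)
    (hm : (LMIsf A B0 B2 C0 D00 D02 C1 D10 D12 Pm X V M).PosDef)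
    (hc : (fromBlocks Q B1ᵀ B1 (Pp - Pm)).PosDef)
    (htr : Q.trace < γ ^ 2) :
    IsUnit V ∧
    (fromBlocks (fromBlocks Pm 0 0 X) 0 0 (1 : Matrix (Fin ne) (Fin ne) ℝ) -
      fromRows (fromBlocks (A + B2 * (M * V⁻¹)) B0 (C0 + D02 * (M * V⁻¹)) D00)
          (fromCols (C1 + D12 * (M * V⁻¹)) D10) *
        fromBlocks Pm 0 0 X *
        (fromRows (fromBlocks (A + B2 * (M * V⁻¹)) B0 (C0 + D02 * (M * V⁻¹)) D00)
          (fromCols (C1 + D12 * (M * V⁻¹)) D10))ᵀ).PosDef ∧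
    (fromBlocks (fromBlocks Pp 0 0 X) 0 0 (1 : Matrix (Fin ne) (Fin ne) ℝ) -
      fromRows (fromBlocks (A + B2 * (M * V⁻¹)) B0 (C0 + D02 * (M * V⁻¹)) D00)
          (fromCols (C1 + D12 * (M * V⁻¹)) D10) *
        fromBlocks Pp 0 0 X *
        (fromRows (fromBlocks (A + B2 * (M * V⁻¹)) B0 (C0 + D02 * (M * V⁻¹)) D00)
          (fromCols (C1 + D12 * (M * V⁻¹)) D10))ᵀ).PosDef ∧
    (fromBlocks Q B1ᵀ B1 (Pp - Pm)).PosDef ∧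
    Q.trace < γ ^ 2 := by
  have hXs : Xᵀ = X := by
    rw [← Matrix.conjTranspose_eq_transpose_of_trivial]; exact hX.1
  have hV : IsUnit V.det := by
    by_contra hdet
    have hdet0 : V.det = 0 := by
      simpa [isUnit_iff_ne_zero] using hdet
    obtain ⟨v, hv, hv0⟩ := (Matrix.exists_mulVec_eq_zero_iff).2 hdet0
    set z : (((Fin n ⊕ Fin np) ⊕ (Fin n ⊕ Fin np)) ⊕ Fin ne) → ℝ :=
      Sum.elim (Sum.elim (Sum.elim v 0) 0) 0 with hzdef
    have hz : z ≠ 0 := by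
      intro h0
      exact hv (funext fun i => congrFun h0 (Sum.inl (Sum.inl (Sum.inl i))))
    have hq := hp.dotProduct_mulVec_pos hz
    rw [show star z = z from funext fun i => star_trivial _] at hq
    simp only [LMIsf, blk55, col5, hzdef, Matrix.fromRows_mulVec,
      Matrix.fromCols_mulVec_sumElim, sumElim_dotProduct_sumElim,
      Matrix.zero_mulVec, Matrix.one_mulVec, Matrix.mulVec_zero,
      dotProduct_zero, zero_dotProduct, add_zero, zero_add,
      Matrix.add_mulVec, Matrix.sub_mulVec, dotProduct_add,
      dotProduct_sub, hv0, dpT] at hq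
    have hPv := hPp.dotProduct_mulVec_pos hv
    rw [show star v = v from funext fun i => star_trivial _] at hPv
    have hPps : Ppᵀ = Pp := by
      rw [← Matrix.conjTranspose_eq_transpose_of_trivial]; exact hPp.1
    rw [Matrix.transpose_transpose, hv0, hPps] at hq
    simp only [zero_dotProduct, zero_sub] at hq
    rw [dotProduct_comm] at hq
    linarith
  refine ⟨(Matrix.isUnit_iff_isUnit_det V).2 hV, ?_, ?_, hc, htr⟩
  · exact aux_key A B0 B2 C0 D00 D02 C1 D10 D12 Pm X V M hPm hXs hV hm
  · exact aux_key A B0 B2 C0 D00 D02 C1 D10 D12 Pp X V M hPp hXs hV hp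
end Aux
end

section
/- Let L and J be symmetric m×m real matrices such that the 2m×2m block matrix [[L, I_m],[I_m, J]] is positive definite. Then there exists a symmetric positive definite 2m×2m matrix X whose (1,1) m×m block equals J and such that the (1,1) m×m block of X⁻¹ equals L. -/
open Matrix
open scoped Matrix

section Aux
variable {m : ℕ}

lemma blk_posdef_left {L J : Matrix (Fin m) (Fin m) ℝ} (hL : L.IsHermitian)
    (h : (fromBlocks L 1 1 J).PosDef) : L.PosDef := by
  refine .of_dotProduct_mulVec_pos hL fun x hx => ?_
  have := h.dotProduct_mulVec_pos (x := Sum.elim x 0) (by simpa using fun hc => hx (funext fun i => congrFun hc (Sum.inl i)))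
  simpa [fromBlocks_mulVec, Function.star_sumElim, dotProduct] using this

lemma blk_schur_posdef {L J : Matrix (Fin m) (Fin m) ℝ} (hL : L.IsHermitian) (hJ : J.IsHermitian)
    (h : (fromBlocks L 1 1 J).PosDef) : (J - L⁻¹).PosDef := by
  have hLpd := blk_posdef_left hL h
  haveI := hLpd.isUnit.invertible
  refine .of_dotProduct_mulVec_pos (hJ.sub hL.inv) fun y hy => ?_
  have h1 : (fromBlocks L 1 1 J) = fromBlocks L 1 (1 : Matrix (Fin m) (Fin m) ℝ)ᴴ J := by
    rw [conjTranspose_one]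
  have key := schur_complement_eq₁₁ (A := L) (1 : Matrix (Fin m) (Fin m) ℝ) J
      (-((L⁻¹ * 1) *ᵥ y)) y hL
  have hne : (Sum.elim (-((L⁻¹ * 1) *ᵥ y)) y) ≠ 0 := by
    intro hc; exact hy (funext fun i => congrFun hc (Sum.inr i))
  have := h.dotProduct_mulVec_pos hne
  rw [dotProduct_mulVec, h1, key, neg_add_cancel] at this
  simpa [dotProduct_mulVec] using this

lemma blk_posdef_mk {J K : Matrix (Fin m) (Fin m) ℝ} (hJ : J.IsHermitian)
    (hK : K.PosDef) (hS : (J - K⁻¹).PosDef) : (fromBlocks J 1 1 K).PosDef := by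
  haveI := hK.isUnit.invertible
  have h1 : (fromBlocks J 1 1 K) = fromBlocks J 1 (1 : Matrix (Fin m) (Fin m) ℝ)ᴴ K := by
    rw [conjTranspose_one]
  refine .of_dotProduct_mulVec_pos ?_ ?_
  · rw [h1, IsHermitian, fromBlocks_conjTranspose, conjTranspose_conjTranspose,
      hJ.eq, hK.1.eq]
  · intro z hz
    rw [← Sum.elim_comp_inl_inr z, dotProduct_mulVec, h1,
      schur_complement_eq₂₂ J (1 : Matrix (Fin m) (Fin m) ℝ) (z ∘ Sum.inl) (z ∘ Sum.inr) hK.1]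
    have hS' : (J - 1 * K⁻¹ * (1 : Matrix (Fin m) (Fin m) ℝ)ᴴ) = J - K⁻¹ := by
      simp
    rw [hS']
    rcases eq_or_ne (z ∘ Sum.inl) 0 with hx | hx
    · have hy : (z ∘ Sum.inr) ≠ 0 := by
        intro hc
        apply hz
        funext i
        cases i with
        | inl i => exact congrFun hx i
        | inr i => exact congrFun hc i
      have hv : ((K⁻¹ * (1 : Matrix (Fin m) (Fin m) ℝ)ᴴ) *ᵥ (z ∘ Sum.inl) + z ∘ Sum.inr)
          = z ∘ Sum.inr := by
        rw [hx]; simp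
      rw [hv, hx]
      simpa [dotProduct_mulVec] using hK.dotProduct_mulVec_pos hy
    · have t1 : 0 ≤ star ((K⁻¹ * (1 : Matrix (Fin m) (Fin m) ℝ)ᴴ) *ᵥ (z ∘ Sum.inl) + z ∘ Sum.inr)
          ᵥ* K ⬝ᵥ ((K⁻¹ * (1 : Matrix (Fin m) (Fin m) ℝ)ᴴ) *ᵥ (z ∘ Sum.inl) + z ∘ Sum.inr) := by
        rw [← dotProduct_mulVec]; exact hK.posSemidef.dotProduct_mulVec_nonneg _
      have t2 : 0 < star (z ∘ Sum.inl) ᵥ* (J - K⁻¹) ⬝ᵥ (z ∘ Sum.inl) := by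
        rw [← dotProduct_mulVec]; exact hS.dotProduct_mulVec_pos hx
      linarith

end Aux

/-- If `L`, `J` are symmetric `m × m` matrices with `[[L, I],[I, J]]` positive definite, then
there exists a symmetric positive definite `2m × 2m` matrix `X` whose `(1,1)` block is `J`
and such that the `(1,1)` block of `X⁻¹` is `L`. -/
theorem statement9 {m : ℕ} (L J : Matrix (Fin m) (Fin m) ℝ)
    (hL : L.IsHermitian) (hJ : J.IsHermitian)
    (h : (fromBlocks L 1 1 J).PosDef) :
    ∃ X : Matrix (Fin m ⊕ Fin m) (Fin m ⊕ Fin m) ℝ,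
      X.PosDef ∧ X.toBlocks₁₁ = J ∧ X⁻¹.toBlocks₁₁ = L := by
  have hLpd := blk_posdef_left hL h
  have hEpd := blk_schur_posdef hL hJ h
  set M : Matrix (Fin m) (Fin m) ℝ := L⁻¹ with hM
  set E : Matrix (Fin m) (Fin m) ℝ := J - M with hE
  set K : Matrix (Fin m) (Fin m) ℝ := E⁻¹ with hK
  have hKpd : K.PosDef := hEpd.inv
  have hKinv : K⁻¹ = E := nonsing_inv_nonsing_inv E hEpd.det_pos.ne'.isUnit
  -- basic inverse identities
  have hLM : L * M = 1 := mul_nonsing_inv L hLpd.det_pos.ne'.isUnit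
  have hML : M * L = 1 := nonsing_inv_mul L hLpd.det_pos.ne'.isUnit
  have hKE : K * E = 1 := nonsing_inv_mul E hEpd.det_pos.ne'.isUnit
  have hMLX : ∀ X : Matrix (Fin m) (Fin m) ℝ, M * (L * X) = X := fun X => by
    rw [← Matrix.mul_assoc, hML, Matrix.one_mul]
  have hLMX : ∀ X : Matrix (Fin m) (Fin m) ℝ, L * (M * X) = X := fun X => by
    rw [← Matrix.mul_assoc, hLM, Matrix.one_mul]
  have hKEX : ∀ X : Matrix (Fin m) (Fin m) ℝ, K * (E * X) = X := fun X => by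
    rw [← Matrix.mul_assoc, hKE, Matrix.one_mul]
  refine ⟨fromBlocks J 1 1 K, ?_, ?_, ?_⟩
  · refine blk_posdef_mk hJ hKpd ?_
    rw [hKinv]
    have : J - E = M := by rw [hE]; abel
    rw [this]
    exact hLpd.inv
  · exact toBlocks_fromBlocks₁₁ _ _ _ _
  · have hmul : (fromBlocks J 1 1 K) *
        (fromBlocks L (1 - L * J) (1 - J * L) (E + E * L * E)) = 1 := by
      rw [fromBlocks_multiply]
      have e11 : J * L + 1 * (1 - J * L) = (1 : Matrix (Fin m) (Fin m) ℝ) := by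
        rw [Matrix.one_mul]; abel
      have e12 : J * (1 - L * J) + 1 * (E + E * L * E) = (0 : Matrix (Fin m) (Fin m) ℝ) := by
        rw [Matrix.one_mul, hE]
        simp only [Matrix.mul_sub, Matrix.sub_mul, Matrix.mul_one, Matrix.one_mul,
          Matrix.mul_assoc, hLM, hML, hMLX, hLMX]
        abel
      have hEL : (1 : Matrix (Fin m) (Fin m) ℝ) - J * L = -(E * L) := by
        rw [hE, Matrix.sub_mul, hML]; abel
      have hLE : L * E = L * J - 1 := by
        rw [hE, Matrix.mul_sub, hLM]
      have e21 : 1 * L + K * (1 - J * L) = (0 : Matrix (Fin m) (Fin m) ℝ) := by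
        rw [Matrix.one_mul, hEL, Matrix.mul_neg, hKEX]; abel
      have e22 : 1 * (1 - L * J) + K * (E + E * L * E) = (1 : Matrix (Fin m) (Fin m) ℝ) := by
        rw [Matrix.one_mul, Matrix.mul_add, Matrix.mul_assoc E L E, hKEX, hKE, hLE]; abel
      rw [e11, e12, e21, e22, fromBlocks_one]
    rw [inv_eq_right_inv hmul]
    exact toBlocks_fromBlocks₁₁ _ _ _ _
end

section
/- Let S, R, U be real n×n matrices such that U − R·S is invertible, let M be any invertible n×n matrix, and set N := M⁻¹·(U − R·S). Then N is invertible, the matrix Z := [[I_n, Rᵀ],[0, Mᵀ]] is invertible, and V := [[S, I_n],[N, 0]]·Z⁻¹ is an invertible 2n×2n matrix whose (1,1) block is S and whose (2,1) block is N, while the (1,1) block of V⁻¹ is Rᵀ and the (2,1) block of V⁻¹ is Mᵀ; moreover M·N = U − R·S. -/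
open Matrix

/-- Let `S, R, U` be `n × n` matrices with `U - R*S` invertible, `M` invertible, and
`N := M⁻¹ * (U - R*S)`.  Then `N` is invertible, `Z := [[I, Rᵀ],[0, Mᵀ]]` is invertible, and
`V := [[S, I],[N, 0]] * Z⁻¹` is invertible with `(1,1)` block `S`, `(2,1)` block `N`, while
`V⁻¹` has `(1,1)` block `Rᵀ` and `(2,1)` block `Mᵀ`; moreover `M * N = U - R*S`. -/
theorem statement10 {n : ℕ} (S R U M : Matrix (Fin n) (Fin n) ℝ)
    (hU : IsUnit (U - R * S)) (hM : IsUnit M) :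
    IsUnit (M⁻¹ * (U - R * S)) ∧
    IsUnit (fromBlocks (1 : Matrix (Fin n) (Fin n) ℝ) Rᵀ 0 Mᵀ) ∧
    IsUnit (fromBlocks S 1 (M⁻¹ * (U - R * S)) 0 *
        (fromBlocks (1 : Matrix (Fin n) (Fin n) ℝ) Rᵀ 0 Mᵀ)⁻¹) ∧
    (fromBlocks S 1 (M⁻¹ * (U - R * S)) 0 *
        (fromBlocks (1 : Matrix (Fin n) (Fin n) ℝ) Rᵀ 0 Mᵀ)⁻¹).toBlocks₁₁ = S ∧
    (fromBlocks S 1 (M⁻¹ * (U - R * S)) 0 *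
        (fromBlocks (1 : Matrix (Fin n) (Fin n) ℝ) Rᵀ 0 Mᵀ)⁻¹).toBlocks₂₁ =
      M⁻¹ * (U - R * S) ∧
    ((fromBlocks S 1 (M⁻¹ * (U - R * S)) 0 *
        (fromBlocks (1 : Matrix (Fin n) (Fin n) ℝ) Rᵀ 0 Mᵀ)⁻¹)⁻¹).toBlocks₁₁ = Rᵀ ∧
    ((fromBlocks S 1 (M⁻¹ * (U - R * S)) 0 *
        (fromBlocks (1 : Matrix (Fin n) (Fin n) ℝ) Rᵀ 0 Mᵀ)⁻¹)⁻¹).toBlocks₂₁ = Mᵀ ∧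
    M * (M⁻¹ * (U - R * S)) = U - R * S := by
  set N : Matrix (Fin n) (Fin n) ℝ := M⁻¹ * (U - R * S) with hN
  have hMinv : IsUnit (M⁻¹) := (Matrix.isUnit_nonsing_inv_iff).2 hM
  have hNU : IsUnit N := hMinv.mul hU
  have hMT : IsUnit (Mᵀ) := by
    rw [Matrix.isUnit_iff_isUnit_det, Matrix.det_transpose] at *
    exact hM
  have hMN : M * N = U - R * S := by
    rw [hN, ← Matrix.mul_assoc, Matrix.mul_nonsing_inv M
      ((Matrix.isUnit_iff_isUnit_det M).1 hM), Matrix.one_mul]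
  set Z : Matrix (Fin n ⊕ Fin n) (Fin n ⊕ Fin n) ℝ := fromBlocks 1 Rᵀ 0 Mᵀ with hZ
  set Zi : Matrix (Fin n ⊕ Fin n) (Fin n ⊕ Fin n) ℝ :=
    fromBlocks 1 (-(Rᵀ * Mᵀ⁻¹)) 0 Mᵀ⁻¹ with hZi
  have hZZi : Z * Zi = 1 := by
    rw [hZ, hZi, Matrix.fromBlocks_multiply]
    rw [Matrix.mul_nonsing_inv Mᵀ ((Matrix.isUnit_iff_isUnit_det Mᵀ).1 hMT)]
    simp [Matrix.mul_assoc, Matrix.mul_nonsing_inv Mᵀ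
      ((Matrix.isUnit_iff_isUnit_det Mᵀ).1 hMT), ← Matrix.fromBlocks_one]
  have hZiZ : Zi * Z = 1 := by
    rw [hZ, hZi, Matrix.fromBlocks_multiply]
    rw [Matrix.nonsing_inv_mul Mᵀ ((Matrix.isUnit_iff_isUnit_det Mᵀ).1 hMT)]
    simp [Matrix.mul_assoc, Matrix.nonsing_inv_mul Mᵀ
      ((Matrix.isUnit_iff_isUnit_det Mᵀ).1 hMT), Matrix.mul_sub, ← Matrix.fromBlocks_one]
  have hZunit : IsUnit Z := (Matrix.isUnit_iff_isUnit_det _).2 (Matrix.isUnit_det_of_right_inverse hZZi)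
  have hZinv : Z⁻¹ = Zi := Matrix.inv_eq_right_inv hZZi
  set W : Matrix (Fin n ⊕ Fin n) (Fin n ⊕ Fin n) ℝ := fromBlocks S 1 N 0 with hW
  set Wi : Matrix (Fin n ⊕ Fin n) (Fin n ⊕ Fin n) ℝ :=
    fromBlocks 0 N⁻¹ 1 (-(S * N⁻¹)) with hWi
  have hNdet := (Matrix.isUnit_iff_isUnit_det N).1 hNU
  have hWWi : W * Wi = 1 := by
    rw [hW, hWi, Matrix.fromBlocks_multiply]
    simp [Matrix.mul_nonsing_inv N hNdet, ← Matrix.fromBlocks_one]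
  have hWiW : Wi * W = 1 := by
    rw [hW, hWi, Matrix.fromBlocks_multiply]
    simp [Matrix.mul_assoc, Matrix.nonsing_inv_mul N hNdet, ← Matrix.fromBlocks_one]
  have hWunit : IsUnit W := (Matrix.isUnit_iff_isUnit_det _).2 (Matrix.isUnit_det_of_right_inverse hWWi)
  have hWinv : W⁻¹ = Wi := Matrix.inv_eq_right_inv hWWi
  have hZiunit : IsUnit Z⁻¹ := (Matrix.isUnit_nonsing_inv_iff).2 hZunit
  have hVunit : IsUnit (W * Z⁻¹) := hWunit.mul hZiunit
  have hVval : W * Z⁻¹ = fromBlocks S (-(S * (Rᵀ * Mᵀ⁻¹)) + Mᵀ⁻¹) N (-(N * (Rᵀ * Mᵀ⁻¹))) := by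
    rw [hZinv, hW, hZi, Matrix.fromBlocks_multiply]
    simp
  have hVinv : (W * Z⁻¹)⁻¹ = Z * Wi := by
    rw [Matrix.mul_inv_rev, Matrix.nonsing_inv_nonsing_inv Z
      ((Matrix.isUnit_iff_isUnit_det Z).1 hZunit), hWinv]
  have hViVal : (W * Z⁻¹)⁻¹ = fromBlocks Rᵀ (N⁻¹ + Rᵀ * -(S * N⁻¹)) Mᵀ (Mᵀ * -(S * N⁻¹)) := by
    rw [hVinv, hZ, hWi, Matrix.fromBlocks_multiply]
    simp
  refine ⟨hNU, hZunit, hVunit, ?_, ?_, ?_, ?_, hMN⟩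
  · rw [hVval]; exact Matrix.toBlocks_fromBlocks₁₁ _ _ _ _
  · rw [hVval]; exact Matrix.toBlocks_fromBlocks₂₁ _ _ _ _
  · rw [hViVal]; exact Matrix.toBlocks_fromBlocks₁₁ _ _ _ _
  · rw [hViVal]; exact Matrix.toBlocks_fromBlocks₂₁ _ _ _ _
end

section
/- Let V be an invertible 2n×2n matrix with n×n block partition V = [[S, V₁₂],[N, V₂₂]] and V⁻¹ = [[Rᵀ, Y₁₂],[Mᵀ, Y₂₂]], and let X be an invertible symmetric 2n_p×2n_p matrix with n_p×n_p block partition X = [[J, J₂],[J₂ᵀ, J₃]] and X⁻¹ = [[L, L₂],[L₂ᵀ, L₃]]. Set Z := [[I_n, Rᵀ],[0, Mᵀ]] and W₁ := [[L, I_{n_p}],[L₂ᵀ, 0]]. Given controller matrices K = [[A_k, B_{k1}, B_{k0}],[C_{k1}, 0, D_{k10}],[C_{k0}, 0, D_{k00}]], define the transformed controller matrices K̂ := [[R·A·S, 0, R·B0·J],[0, 0, 0],[L·C0·S, 0, L·D00·J]] + [[M, R·B2, 0],[0, I_{n_u}, 0],[0, L·D02, L₂]]·K·[[N, 0, 0],[C2·S,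 I_{n_y}, D20·J],[0, 0, J₂ᵀ]]. Then the block matrix [[Zᵀ·A_cl·V·Z, Zᵀ·B0cl·X·W₁, Zᵀ·B1cl],[W₁ᵀ·C0cl·V·Z, W₁ᵀ·D00cl·X·W₁, W₁ᵀ·D01cl],[C1cl·V·Z, D10cl·X·W₁, D11cl]] equals [[A·S, A, B0, B0·J, B1],[0, R·A, R·B0, 0, R·B1],[0, L·C0, L·D00, 0, 0],[C0·S, C0, D00, D00·J, 0],[C1·S, C1, D10, D10·J, 0]] + [[0, B2, 0],[I_n, 0, 0],[0, 0, I_{n_p}],[0, D02, 0],[0, D12, 0]]·K̂·[[I_n, 0, 0, 0, 0],[0, C2, D20, 0, D21],[0, 0, 0, I_{n_p}, 0]]. -/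
open Matrix

/-- Concatenation of three column blocks. -/
def col3 {m c1 c2 c3 : Type*}
    (M1 : Matrix m c1 ℝ) (M2 : Matrix m c2 ℝ) (M3 : Matrix m c3 ℝ) :
    Matrix m ((c1 ⊕ c2) ⊕ c3) ℝ :=
  fromCols (fromCols M1 M2) M3

/-- Concatenation of three row blocks. -/
def row3 {r1 r2 r3 m : Type*}
    (M1 : Matrix r1 m ℝ) (M2 : Matrix r2 m ℝ) (M3 : Matrix r3 m ℝ) :
    Matrix ((r1 ⊕ r2) ⊕ r3) m ℝ :=
  fromRows (fromRows M1 M2) M3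

/-- A `3 × 3` block matrix assembled from its nine blocks. -/
def blk33 {r1 r2 r3 c1 c2 c3 : Type*}
    (M11 : Matrix r1 c1 ℝ) (M12 : Matrix r1 c2 ℝ) (M13 : Matrix r1 c3 ℝ)
    (M21 : Matrix r2 c1 ℝ) (M22 : Matrix r2 c2 ℝ) (M23 : Matrix r2 c3 ℝ)
    (M31 : Matrix r3 c1 ℝ) (M32 : Matrix r3 c2 ℝ) (M33 : Matrix r3 c3 ℝ) :
    Matrix ((r1 ⊕ r2) ⊕ r3) ((c1 ⊕ c2) ⊕ c3) ℝ :=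
  row3 (col3 M11 M12 M13) (col3 M21 M22 M23) (col3 M31 M32 M33)

/-- The data of the LFT plant: state dimension `n`, uncertainty channel dimension `np`,
disturbance dimension `nd`, error dimension `ne`, control dimension `nu`, and measurement
dimension `ny`. -/
structure Plant (n np nd ne nu ny : ℕ) where
  A : Matrix (Fin n) (Fin n) ℝ
  B0 : Matrix (Fin n) (Fin np) ℝ
  B1 : Matrix (Fin n) (Fin nd) ℝ
  B2 : Matrix (Fin n) (Fin nu) ℝ
  C0 : Matrix (Fin np) (Fin n) ℝ
  D00 : Matrix (Fin np) (Fin np) ℝ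
  D02 : Matrix (Fin np) (Fin nu) ℝ
  C1 : Matrix (Fin ne) (Fin n) ℝ
  D10 : Matrix (Fin ne) (Fin np) ℝ
  D12 : Matrix (Fin ne) (Fin nu) ℝ
  C2 : Matrix (Fin ny) (Fin n) ℝ
  D20 : Matrix (Fin ny) (Fin np) ℝ
  D21 : Matrix (Fin ny) (Fin nd) ℝ

variable {n np nd ne nu ny : ℕ}

/-- The `3 × 3` block controller matrix `[[A_k, B_{k1}, B_{k0}],[C_{k1}, 0, D_{k10}],
[C_{k0}, 0, D_{k00}]]`. -/
def ctrlMat (Ak : Matrix (Fin n) (Fin n) ℝ) (Bk1 : Matrix (Fin n) (Fin ny) ℝ)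
    (Bk0 : Matrix (Fin n) (Fin np) ℝ) (Ck1 : Matrix (Fin nu) (Fin n) ℝ)
    (Dk10 : Matrix (Fin nu) (Fin np) ℝ) (Ck0 : Matrix (Fin np) (Fin n) ℝ)
    (Dk00 : Matrix (Fin np) (Fin np) ℝ) :
    Matrix ((Fin n ⊕ Fin nu) ⊕ Fin np) ((Fin n ⊕ Fin ny) ⊕ Fin np) ℝ :=
  blk33 Ak Bk1 Bk0 Ck1 0 Dk10 Ck0 0 Dk00

/-- The closed-loop matrix
`[[A_cl, B0cl, B1cl],[C0cl, D00cl, D01cl],[C1cl, D10cl, D11cl]]`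
of the LFT plant `G` interconnected with the gain-scheduled controller `K`, with block row
sizes `(n, n, np, np, ne)` and block column sizes `(n, n, np, np, nd)`. -/
def clBig (G : Plant n np nd ne nu ny)
    (K : Matrix ((Fin n ⊕ Fin nu) ⊕ Fin np) ((Fin n ⊕ Fin ny) ⊕ Fin np) ℝ) :
    Matrix (((Fin n ⊕ Fin n) ⊕ (Fin np ⊕ Fin np)) ⊕ Fin ne)
      (((Fin n ⊕ Fin n) ⊕ (Fin np ⊕ Fin np)) ⊕ Fin nd) ℝ :=
  blk33 (fromBlocks G.A 0 0 0) (fromBlocks G.B0 0 0 0) (fromRows G.B1 0)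
      (fromBlocks G.C0 0 0 0) (fromBlocks G.D00 0 0 0) 0
      (fromCols G.C1 0) (fromCols G.D10 0) 0
    + row3 (fromRows (col3 0 G.B2 0) (col3 (1 : Matrix (Fin n) (Fin n) ℝ) 0 0))
        (fromRows (col3 0 G.D02 0) (col3 0 0 (1 : Matrix (Fin np) (Fin np) ℝ)))
        (col3 0 G.D12 0) * K *
      col3 (fromCols (row3 0 G.C2 0) (row3 1 0 0))
        (fromCols (row3 0 G.D20 0) (row3 0 0 1))
        (row3 0 G.D21 0)

/-- Closed-loop state matrix `A_cl` (`2n × 2n`). -/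
def Acl (G : Plant n np nd ne nu ny)
    (K : Matrix ((Fin n ⊕ Fin nu) ⊕ Fin np) ((Fin n ⊕ Fin ny) ⊕ Fin np) ℝ) :=
  ((clBig G K).toBlocks₁₁).toBlocks₁₁

/-- Closed-loop matrix `B_{0,cl}` (`2n × 2np`). -/
def B0cl (G : Plant n np nd ne nu ny)
    (K : Matrix ((Fin n ⊕ Fin nu) ⊕ Fin np) ((Fin n ⊕ Fin ny) ⊕ Fin np) ℝ) :=
  ((clBig G K).toBlocks₁₁).toBlocks₁₂

/-- Closed-loop matrix `B_{1,cl}` (`2n × nd`). -/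
def B1cl (G : Plant n np nd ne nu ny)
    (K : Matrix ((Fin n ⊕ Fin nu) ⊕ Fin np) ((Fin n ⊕ Fin ny) ⊕ Fin np) ℝ) :=
  ((clBig G K).toBlocks₁₂).toRows₁

/-- Closed-loop matrix `C_{0,cl}` (`2np × 2n`). -/
def C0cl (G : Plant n np nd ne nu ny)
    (K : Matrix ((Fin n ⊕ Fin nu) ⊕ Fin np) ((Fin n ⊕ Fin ny) ⊕ Fin np) ℝ) :=
  ((clBig G K).toBlocks₁₁).toBlocks₂₁

/-- Closed-loop matrix `D_{00,cl}` (`2np × 2np`). -/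
def D00cl (G : Plant n np nd ne nu ny)
    (K : Matrix ((Fin n ⊕ Fin nu) ⊕ Fin np) ((Fin n ⊕ Fin ny) ⊕ Fin np) ℝ) :=
  ((clBig G K).toBlocks₁₁).toBlocks₂₂

/-- Closed-loop matrix `D_{01,cl}` (`2np × nd`). -/
def D01cl (G : Plant n np nd ne nu ny)
    (K : Matrix ((Fin n ⊕ Fin nu) ⊕ Fin np) ((Fin n ⊕ Fin ny) ⊕ Fin np) ℝ) :=
  ((clBig G K).toBlocks₁₂).toRows₂

/-- Closed-loop matrix `C_{1,cl}` (`ne × 2n`). -/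
def C1cl (G : Plant n np nd ne nu ny)
    (K : Matrix ((Fin n ⊕ Fin nu) ⊕ Fin np) ((Fin n ⊕ Fin ny) ⊕ Fin np) ℝ) :=
  ((clBig G K).toBlocks₂₁).toCols₁

/-- Closed-loop matrix `D_{10,cl}` (`ne × 2np`). -/
def D10cl (G : Plant n np nd ne nu ny)
    (K : Matrix ((Fin n ⊕ Fin nu) ⊕ Fin np) ((Fin n ⊕ Fin ny) ⊕ Fin np) ℝ) :=
  ((clBig G K).toBlocks₂₁).toCols₂

/-- Closed-loop matrix `D_{11,cl}` (`ne × nd`). -/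
def D11cl (G : Plant n np nd ne nu ny)
    (K : Matrix ((Fin n ⊕ Fin nu) ⊕ Fin np) ((Fin n ⊕ Fin ny) ⊕ Fin np) ℝ) :=
  (clBig G K).toBlocks₂₂

/-- The matrix `Z := [[I, Rᵀ],[0, Mᵀ]]` built from the blocks `Rᵀ, Mᵀ` of `V⁻¹`. -/
noncomputable def Zmat (V : Matrix (Fin n ⊕ Fin n) (Fin n ⊕ Fin n) ℝ) :
    Matrix (Fin n ⊕ Fin n) (Fin n ⊕ Fin n) ℝ :=
  fromBlocks 1 (V⁻¹.toBlocks₁₁) 0 (V⁻¹.toBlocks₂₁)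

/-- The matrix `W₁ := [[L, I],[L₂ᵀ, 0]]` built from the blocks `L, L₂` of `X⁻¹`. -/
noncomputable def W1mat (X : Matrix (Fin np ⊕ Fin np) (Fin np ⊕ Fin np) ℝ) :
    Matrix (Fin np ⊕ Fin np) (Fin np ⊕ Fin np) ℝ :=
  fromBlocks (X⁻¹.toBlocks₁₁) 1 ((X⁻¹.toBlocks₁₂)ᵀ) 0

/-- The transformed controller matrices `K̂`, obtained from the controller matrices `K` via
the congruence-transformation data `S, N, R, M` (blocks of `V`, `V⁻¹`) and `J, J₂, L, L₂`
(blocks of `X`, `X⁻¹`). -/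
noncomputable def KhatOf (G : Plant n np nd ne nu ny)
    (V : Matrix (Fin n ⊕ Fin n) (Fin n ⊕ Fin n) ℝ)
    (X : Matrix (Fin np ⊕ Fin np) (Fin np ⊕ Fin np) ℝ)
    (K : Matrix ((Fin n ⊕ Fin nu) ⊕ Fin np) ((Fin n ⊕ Fin ny) ⊕ Fin np) ℝ) :
    Matrix ((Fin n ⊕ Fin nu) ⊕ Fin np) ((Fin n ⊕ Fin ny) ⊕ Fin np) ℝ :=
  blk33 ((V⁻¹.toBlocks₁₁)ᵀ * G.A * V.toBlocks₁₁) 0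
      ((V⁻¹.toBlocks₁₁)ᵀ * G.B0 * X.toBlocks₁₁)
    0 0 0
    (X⁻¹.toBlocks₁₁ * G.C0 * V.toBlocks₁₁) 0 (X⁻¹.toBlocks₁₁ * G.D00 * X.toBlocks₁₁)
  + blk33 ((V⁻¹.toBlocks₂₁)ᵀ) ((V⁻¹.toBlocks₁₁)ᵀ * G.B2) 0
      0 1 0
      0 (X⁻¹.toBlocks₁₁ * G.D02) (X⁻¹.toBlocks₁₂) * K *
    blk33 (V.toBlocks₂₁) 0 0
      (G.C2 * V.toBlocks₁₁) 1 (G.D20 * X.toBlocks₁₁)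
      0 0 ((X.toBlocks₁₂)ᵀ)



section helpers
variable {r1 r2 r3 c1 c2 c3 m p q : Type*}

lemma row3_mul' [Fintype m] (A1 : Matrix r1 m ℝ) (A2 : Matrix r2 m ℝ) (A3 : Matrix r3 m ℝ)
    (B : Matrix m p ℝ) : row3 A1 A2 A3 * B = row3 (A1 * B) (A2 * B) (A3 * B) := by
  simp [row3, fromRows_mul]

lemma mul_col3' [Fintype m] (B : Matrix p m ℝ) (A1 : Matrix m c1 ℝ) (A2 : Matrix m c2 ℝ)
    (A3 : Matrix m c3 ℝ) : B * col3 A1 A2 A3 = col3 (B * A1) (B * A2) (B * A3) := by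
  simp [col3, mul_fromCols]

lemma col3_add (A1 : Matrix p c1 ℝ) (A2 : Matrix p c2 ℝ) (A3 : Matrix p c3 ℝ)
    (B1 : Matrix p c1 ℝ) (B2 : Matrix p c2 ℝ) (B3 : Matrix p c3 ℝ) :
    col3 A1 A2 A3 + col3 B1 B2 B3 = col3 (A1 + B1) (A2 + B2) (A3 + B3) := by
  ext i ((j | j) | j) <;> simp [col3, fromCols]

lemma row3_add (A1 : Matrix r1 p ℝ) (A2 : Matrix r2 p ℝ) (A3 : Matrix r3 p ℝ)
    (B1 : Matrix r1 p ℝ) (B2 : Matrix r2 p ℝ) (B3 : Matrix r3 p ℝ) :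
    row3 A1 A2 A3 + row3 B1 B2 B3 = row3 (A1 + B1) (A2 + B2) (A3 + B3) := by
  ext ((i | i) | i) j <;> simp [row3]

lemma col3_mul_row3 [Fintype c1] [Fintype c2] [Fintype c3]
    (A1 : Matrix p c1 ℝ) (A2 : Matrix p c2 ℝ) (A3 : Matrix p c3 ℝ)
    (B1 : Matrix c1 q ℝ) (B2 : Matrix c2 q ℝ) (B3 : Matrix c3 q ℝ) :
    col3 A1 A2 A3 * row3 B1 B2 B3 = A1 * B1 + A2 * B2 + A3 * B3 := by
  simp [col3, row3, fromCols_mul_fromRows]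

lemma row3_mul_col3 [Fintype m]
    (A1 : Matrix r1 m ℝ) (A2 : Matrix r2 m ℝ) (A3 : Matrix r3 m ℝ)
    (B1 : Matrix m c1 ℝ) (B2 : Matrix m c2 ℝ) (B3 : Matrix m c3 ℝ) :
    row3 A1 A2 A3 * col3 B1 B2 B3 =
      blk33 (A1 * B1) (A1 * B2) (A1 * B3) (A2 * B1) (A2 * B2) (A2 * B3)
        (A3 * B1) (A3 * B2) (A3 * B3) := by
  rw [row3, col3, fromRows_mul, fromRows_mul, mul_fromCols, mul_fromCols,
    mul_fromCols, mul_fromCols, mul_fromCols, mul_fromCols]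
  rfl

lemma col3_mul_blk33 [Fintype c1] [Fintype c2] [Fintype c3]
    {d1 d2 d3 : Type*}
    (a : Matrix p c1 ℝ) (b : Matrix p c2 ℝ) (c : Matrix p c3 ℝ)
    (M11 : Matrix c1 d1 ℝ) (M12 : Matrix c1 d2 ℝ) (M13 : Matrix c1 d3 ℝ)
    (M21 : Matrix c2 d1 ℝ) (M22 : Matrix c2 d2 ℝ) (M23 : Matrix c2 d3 ℝ)
    (M31 : Matrix c3 d1 ℝ) (M32 : Matrix c3 d2 ℝ) (M33 : Matrix c3 d3 ℝ) :
    col3 a b c * blk33 M11 M12 M13 M21 M22 M23 M31 M32 M33 =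
      col3 (a * M11 + b * M21 + c * M31) (a * M12 + b * M22 + c * M32)
        (a * M13 + b * M23 + c * M33) := by
  rw [blk33, col3_mul_row3, mul_col3', mul_col3', mul_col3', col3_add, col3_add]

lemma blk33_mul_row3 [Fintype c1] [Fintype c2] [Fintype c3]
    (M11 : Matrix r1 c1 ℝ) (M12 : Matrix r1 c2 ℝ) (M13 : Matrix r1 c3 ℝ)
    (M21 : Matrix r2 c1 ℝ) (M22 : Matrix r2 c2 ℝ) (M23 : Matrix r2 c3 ℝ)
    (M31 : Matrix r3 c1 ℝ) (M32 : Matrix r3 c2 ℝ) (M33 : Matrix r3 c3 ℝ)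
    (x : Matrix c1 q ℝ) (y : Matrix c2 q ℝ) (z : Matrix c3 q ℝ) :
    blk33 M11 M12 M13 M21 M22 M23 M31 M32 M33 * row3 x y z =
      row3 (M11 * x + M12 * y + M13 * z) (M21 * x + M22 * y + M23 * z)
        (M31 * x + M32 * y + M33 * z) := by
  rw [blk33, row3_mul', col3_mul_row3, col3_mul_row3, col3_mul_row3]

lemma blk33_eq_fromBlocks
    (M11 : Matrix r1 c1 ℝ) (M12 : Matrix r1 c2 ℝ) (M13 : Matrix r1 c3 ℝ)
    (M21 : Matrix r2 c1 ℝ) (M22 : Matrix r2 c2 ℝ) (M23 : Matrix r2 c3 ℝ)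
    (M31 : Matrix r3 c1 ℝ) (M32 : Matrix r3 c2 ℝ) (M33 : Matrix r3 c3 ℝ) :
    blk33 M11 M12 M13 M21 M22 M23 M31 M32 M33 =
      fromBlocks (fromBlocks M11 M12 M21 M22) (fromRows M13 M23)
        (fromCols M31 M32) M33 := by
  ext ((i | i) | i) ((j | j) | j) <;> rfl

lemma blk33_congr
    {M11 N11 : Matrix r1 c1 ℝ} {M12 N12 : Matrix r1 c2 ℝ} {M13 N13 : Matrix r1 c3 ℝ}
    {M21 N21 : Matrix r2 c1 ℝ} {M22 N22 : Matrix r2 c2 ℝ} {M23 N23 : Matrix r2 c3 ℝ}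
    {M31 N31 : Matrix r3 c1 ℝ} {M32 N32 : Matrix r3 c2 ℝ} {M33 N33 : Matrix r3 c3 ℝ}
    (h11 : M11 = N11) (h12 : M12 = N12) (h13 : M13 = N13)
    (h21 : M21 = N21) (h22 : M22 = N22) (h23 : M23 = N23)
    (h31 : M31 = N31) (h32 : M32 = N32) (h33 : M33 = N33) :
    blk33 M11 M12 M13 M21 M22 M23 M31 M32 M33 = blk33 N11 N12 N13 N21 N22 N23 N31 N32 N33 := by
  subst h11 h12 h13 h21 h22 h23 h31 h32 h33; rfl

lemma mul_toBlocks₁₁ {a b c d : Type*} [Fintype c] [Fintype d]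
    (M : Matrix (a ⊕ b) (c ⊕ d) ℝ) (N : Matrix (c ⊕ d) (p ⊕ q) ℝ) :
    (M * N).toBlocks₁₁ = M.toBlocks₁₁ * N.toBlocks₁₁ + M.toBlocks₁₂ * N.toBlocks₂₁ := by
  ext i j
  simp [toBlocks₁₁, toBlocks₁₂, toBlocks₂₁, mul_apply, Fintype.sum_sum_type]

lemma mul_toBlocks₂₁ {a b c d : Type*} [Fintype c] [Fintype d]
    (M : Matrix (a ⊕ b) (c ⊕ d) ℝ) (N : Matrix (c ⊕ d) (p ⊕ q) ℝ) :
    (M * N).toBlocks₂₁ = M.toBlocks₂₁ * N.toBlocks₁₁ + M.toBlocks₂₂ * N.toBlocks₂₁ := by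
  ext i j
  simp [toBlocks₂₁, toBlocks₂₂, toBlocks₁₁, mul_apply, Fintype.sum_sum_type]

lemma toBlocks₁₁_transpose {a b c d : Type*} (M : Matrix (a ⊕ b) (c ⊕ d) ℝ) :
    (Mᵀ).toBlocks₁₁ = (M.toBlocks₁₁)ᵀ := rfl

lemma toBlocks₂₁_transpose {a b c d : Type*} (M : Matrix (a ⊕ b) (c ⊕ d) ℝ) :
    (Mᵀ).toBlocks₂₁ = (M.toBlocks₁₂)ᵀ := rfl

end helpers

section helpers2
variable {r1 r2 r3 c1 c2 c3 : Type*}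

lemma col3_zero {p : Type*} : col3 (0 : Matrix p c1 ℝ) (0 : Matrix p c2 ℝ) (0 : Matrix p c3 ℝ) = 0 := by
  simp [col3]

lemma row3_zero {p : Type*} : row3 (0 : Matrix r1 p ℝ) (0 : Matrix r2 p ℝ) (0 : Matrix r3 p ℝ) = 0 := by
  simp [row3]

lemma blk33_add
    (M11 N11 : Matrix r1 c1 ℝ) (M12 N12 : Matrix r1 c2 ℝ) (M13 N13 : Matrix r1 c3 ℝ)
    (M21 N21 : Matrix r2 c1 ℝ) (M22 N22 : Matrix r2 c2 ℝ) (M23 N23 : Matrix r2 c3 ℝ)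
    (M31 N31 : Matrix r3 c1 ℝ) (M32 N32 : Matrix r3 c2 ℝ) (M33 N33 : Matrix r3 c3 ℝ) :
    blk33 M11 M12 M13 M21 M22 M23 M31 M32 M33 + blk33 N11 N12 N13 N21 N22 N23 N31 N32 N33 =
      blk33 (M11 + N11) (M12 + N12) (M13 + N13) (M21 + N21) (M22 + N22) (M23 + N23)
        (M31 + N31) (M32 + N32) (M33 + N33) := by
  rw [blk33, blk33, blk33, row3_add, col3_add, col3_add, col3_add]

lemma toBlocks₁₁_blk33
    (M11 : Matrix r1 c1 ℝ) (M12 : Matrix r1 c2 ℝ) (M13 : Matrix r1 c3 ℝ)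
    (M21 : Matrix r2 c1 ℝ) (M22 : Matrix r2 c2 ℝ) (M23 : Matrix r2 c3 ℝ)
    (M31 : Matrix r3 c1 ℝ) (M32 : Matrix r3 c2 ℝ) (M33 : Matrix r3 c3 ℝ) :
    (blk33 M11 M12 M13 M21 M22 M23 M31 M32 M33).toBlocks₁₁ = fromBlocks M11 M12 M21 M22 := by
  rw [blk33_eq_fromBlocks, toBlocks_fromBlocks₁₁]

lemma toBlocks₁₂_blk33
    (M11 : Matrix r1 c1 ℝ) (M12 : Matrix r1 c2 ℝ) (M13 : Matrix r1 c3 ℝ)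
    (M21 : Matrix r2 c1 ℝ) (M22 : Matrix r2 c2 ℝ) (M23 : Matrix r2 c3 ℝ)
    (M31 : Matrix r3 c1 ℝ) (M32 : Matrix r3 c2 ℝ) (M33 : Matrix r3 c3 ℝ) :
    (blk33 M11 M12 M13 M21 M22 M23 M31 M32 M33).toBlocks₁₂ = fromRows M13 M23 := by
  rw [blk33_eq_fromBlocks, toBlocks_fromBlocks₁₂]

lemma toBlocks₂₁_blk33
    (M11 : Matrix r1 c1 ℝ) (M12 : Matrix r1 c2 ℝ) (M13 : Matrix r1 c3 ℝ)
    (M21 : Matrix r2 c1 ℝ) (M22 : Matrix r2 c2 ℝ) (M23 : Matrix r2 c3 ℝ)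
    (M31 : Matrix r3 c1 ℝ) (M32 : Matrix r3 c2 ℝ) (M33 : Matrix r3 c3 ℝ) :
    (blk33 M11 M12 M13 M21 M22 M23 M31 M32 M33).toBlocks₂₁ = fromCols M31 M32 := by
  rw [blk33_eq_fromBlocks, toBlocks_fromBlocks₂₁]

lemma toBlocks₂₂_blk33
    (M11 : Matrix r1 c1 ℝ) (M12 : Matrix r1 c2 ℝ) (M13 : Matrix r1 c3 ℝ)
    (M21 : Matrix r2 c1 ℝ) (M22 : Matrix r2 c2 ℝ) (M23 : Matrix r2 c3 ℝ)
    (M31 : Matrix r3 c1 ℝ) (M32 : Matrix r3 c2 ℝ) (M33 : Matrix r3 c3 ℝ) :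
    (blk33 M11 M12 M13 M21 M22 M23 M31 M32 M33).toBlocks₂₂ = M33 := by
  rw [blk33_eq_fromBlocks, toBlocks_fromBlocks₂₂]

lemma sandwichTU {a b c d e f : Type*} [Fintype b] [Fintype c] [Fintype d] [Fintype e]
    (T : Matrix a b ℝ) (P : Matrix b e ℝ) (R : Matrix b c ℝ) (K : Matrix c d ℝ)
    (C : Matrix d e ℝ) (U : Matrix e f ℝ) :
    T * (P + R * K * C) * U = T * P * U + T * R * K * (C * U) := by
  simp only [Matrix.mul_add, Matrix.add_mul, Matrix.mul_assoc]

lemma sandwichT {a b c d e : Type*} [Fintype b] [Fintype c] [Fintype d]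
    (T : Matrix a b ℝ) (P : Matrix b e ℝ) (R : Matrix b c ℝ) (K : Matrix c d ℝ)
    (C : Matrix d e ℝ) :
    T * (P + R * K * C) = T * P + T * R * K * C := by
  simp only [Matrix.mul_add, Matrix.mul_assoc]

lemma sandwichU {b c d e f : Type*} [Fintype c] [Fintype d] [Fintype e]
    (P : Matrix b e ℝ) (R : Matrix b c ℝ) (K : Matrix c d ℝ)
    (C : Matrix d e ℝ) (U : Matrix e f ℝ) :
    (P + R * K * C) * U = P * U + R * K * (C * U) := by
  simp only [Matrix.add_mul, Matrix.mul_assoc]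

end helpers2

lemma fromCols_fromRows_zero_right {r1 r2 c1 c2 : Type*} (a : Matrix r1 c1 ℝ) (b : Matrix r2 c1 ℝ) :
    fromCols (fromRows a b) (0 : Matrix (r1 ⊕ r2) c2 ℝ) = fromBlocks a 0 b 0 := by
  rw [← fromRows_zero, fromCols_fromRows_eq_fromBlocks]

lemma fromCols_zero_fromRows {r1 r2 c1 c2 : Type*} (a : Matrix r1 c2 ℝ) (b : Matrix r2 c2 ℝ) :
    fromCols (0 : Matrix (r1 ⊕ r2) c1 ℝ) (fromRows a b) = fromBlocks 0 a 0 b := by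
  rw [← fromRows_zero, fromCols_fromRows_eq_fromBlocks]

lemma fromRows_fromCols_zero_right {r1 r2 c1 c2 : Type*} (a : Matrix r1 c1 ℝ) (b : Matrix r1 c2 ℝ) :
    fromRows (fromCols a b) (0 : Matrix r2 (c1 ⊕ c2) ℝ) = fromBlocks a b 0 0 := by
  rw [← fromCols_zero, fromRows_fromCols_eq_fromBlocks]

lemma fromRows_zero_fromCols {r1 r2 c1 c2 : Type*} (a : Matrix r2 c1 ℝ) (b : Matrix r2 c2 ℝ) :
    fromRows (0 : Matrix r1 (c1 ⊕ c2) ℝ) (fromCols a b) = fromBlocks 0 0 a b := by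
  rw [← fromCols_zero, fromRows_fromCols_eq_fromBlocks]

lemma cstar_mul_eq {l m k : Type*} [Fintype m] (A : Matrix l m ℝ) (B : Matrix m k ℝ) :
    @HMul.hMul (Matrix l m ℝ) (Matrix m k ℝ) (Matrix l k ℝ)
      CStarMatrix.instHMulOfFintypeOfMulOfAddCommMonoid A B = A * B := rfl

section clsec
variable {n np nd ne nu ny : ℕ}

lemma clBig_eq (G : Plant n np nd ne nu ny)
    (K : Matrix ((Fin n ⊕ Fin nu) ⊕ Fin np) ((Fin n ⊕ Fin ny) ⊕ Fin np) ℝ) :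
    clBig G K = blk33
      (fromBlocks G.A 0 0 0 +
        (fromRows (col3 0 G.B2 0) (col3 1 0 0) : Matrix (Fin n ⊕ Fin n) ((Fin n ⊕ Fin nu) ⊕ Fin np) ℝ) * K * (fromCols (row3 0 G.C2 0) (row3 1 0 0) : Matrix ((Fin n ⊕ Fin ny) ⊕ Fin np) (Fin n ⊕ Fin n) ℝ))
      (fromBlocks G.B0 0 0 0 +
        (fromRows (col3 0 G.B2 0) (col3 1 0 0) : Matrix (Fin n ⊕ Fin n) ((Fin n ⊕ Fin nu) ⊕ Fin np) ℝ) * K * (fromCols (row3 0 G.D20 0) (row3 0 0 1) : Matrix ((Fin n ⊕ Fin ny) ⊕ Fin np) (Fin np ⊕ Fin np) ℝ))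
      (fromRows G.B1 0 +
        (fromRows (col3 0 G.B2 0) (col3 1 0 0) : Matrix (Fin n ⊕ Fin n) ((Fin n ⊕ Fin nu) ⊕ Fin np) ℝ) * K * (row3 0 G.D21 0 : Matrix ((Fin n ⊕ Fin ny) ⊕ Fin np) (Fin nd) ℝ))
      (fromBlocks G.C0 0 0 0 +
        (fromRows (col3 0 G.D02 0) (col3 0 0 1) : Matrix (Fin np ⊕ Fin np) ((Fin n ⊕ Fin nu) ⊕ Fin np) ℝ) * K * (fromCols (row3 0 G.C2 0) (row3 1 0 0) : Matrix ((Fin n ⊕ Fin ny) ⊕ Fin np) (Fin n ⊕ Fin n) ℝ))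
      (fromBlocks G.D00 0 0 0 +
        (fromRows (col3 0 G.D02 0) (col3 0 0 1) : Matrix (Fin np ⊕ Fin np) ((Fin n ⊕ Fin nu) ⊕ Fin np) ℝ) * K * (fromCols (row3 0 G.D20 0) (row3 0 0 1) : Matrix ((Fin n ⊕ Fin ny) ⊕ Fin np) (Fin np ⊕ Fin np) ℝ))
      (0 + (fromRows (col3 0 G.D02 0) (col3 0 0 1) : Matrix (Fin np ⊕ Fin np) ((Fin n ⊕ Fin nu) ⊕ Fin np) ℝ) * K * (row3 0 G.D21 0 : Matrix ((Fin n ⊕ Fin ny) ⊕ Fin np) (Fin nd) ℝ))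
      (fromCols G.C1 0 +
        (col3 0 G.D12 0 : Matrix (Fin ne) ((Fin n ⊕ Fin nu) ⊕ Fin np) ℝ) * K * (fromCols (row3 0 G.C2 0) (row3 1 0 0) : Matrix ((Fin n ⊕ Fin ny) ⊕ Fin np) (Fin n ⊕ Fin n) ℝ))
      (fromCols G.D10 0 +
        (col3 0 G.D12 0 : Matrix (Fin ne) ((Fin n ⊕ Fin nu) ⊕ Fin np) ℝ) * K * (fromCols (row3 0 G.D20 0) (row3 0 0 1) : Matrix ((Fin n ⊕ Fin ny) ⊕ Fin np) (Fin np ⊕ Fin np) ℝ))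
      (0 + (col3 0 G.D12 0 : Matrix (Fin ne) ((Fin n ⊕ Fin nu) ⊕ Fin np) ℝ) * K * (row3 0 G.D21 0 : Matrix ((Fin n ⊕ Fin ny) ⊕ Fin np) (Fin nd) ℝ)) := by
  rw [clBig]
  simp only [cstar_mul_eq]
  rw [row3_mul', row3_mul_col3, blk33_add]

lemma Acl_eq (G : Plant n np nd ne nu ny) (K) :
    Acl G K = fromBlocks G.A 0 0 0 +
      (fromRows (col3 0 G.B2 0) (col3 1 0 0) : Matrix (Fin n ⊕ Fin n) ((Fin n ⊕ Fin nu) ⊕ Fin np) ℝ) * K * (fromCols (row3 0 G.C2 0) (row3 1 0 0) : Matrix ((Fin n ⊕ Fin ny) ⊕ Fin np) (Fin n ⊕ Fin n) ℝ) := by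
  rw [Acl, clBig_eq, toBlocks₁₁_blk33, toBlocks_fromBlocks₁₁]

lemma B0cl_eq (G : Plant n np nd ne nu ny) (K) :
    B0cl G K = fromBlocks G.B0 0 0 0 +
      (fromRows (col3 0 G.B2 0) (col3 1 0 0) : Matrix (Fin n ⊕ Fin n) ((Fin n ⊕ Fin nu) ⊕ Fin np) ℝ) * K * (fromCols (row3 0 G.D20 0) (row3 0 0 1) : Matrix ((Fin n ⊕ Fin ny) ⊕ Fin np) (Fin np ⊕ Fin np) ℝ) := by
  rw [B0cl, clBig_eq, toBlocks₁₁_blk33, toBlocks_fromBlocks₁₂]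

lemma B1cl_eq (G : Plant n np nd ne nu ny) (K) :
    B1cl G K = fromRows G.B1 0 +
      (fromRows (col3 0 G.B2 0) (col3 1 0 0) : Matrix (Fin n ⊕ Fin n) ((Fin n ⊕ Fin nu) ⊕ Fin np) ℝ) * K * (row3 0 G.D21 0 : Matrix ((Fin n ⊕ Fin ny) ⊕ Fin np) (Fin nd) ℝ) := by
  rw [B1cl, clBig_eq, toBlocks₁₂_blk33, toRows₁_fromRows]

lemma C0cl_eq (G : Plant n np nd ne nu ny) (K) :
    C0cl G K = fromBlocks G.C0 0 0 0 +
      (fromRows (col3 0 G.D02 0) (col3 0 0 1) : Matrix (Fin np ⊕ Fin np) ((Fin n ⊕ Fin nu) ⊕ Fin np) ℝ) * K * (fromCols (row3 0 G.C2 0) (row3 1 0 0) : Matrix ((Fin n ⊕ Fin ny) ⊕ Fin np) (Fin n ⊕ Fin n) ℝ) := by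
  rw [C0cl, clBig_eq, toBlocks₁₁_blk33, toBlocks_fromBlocks₂₁]

lemma D00cl_eq (G : Plant n np nd ne nu ny) (K) :
    D00cl G K = fromBlocks G.D00 0 0 0 +
      (fromRows (col3 0 G.D02 0) (col3 0 0 1) : Matrix (Fin np ⊕ Fin np) ((Fin n ⊕ Fin nu) ⊕ Fin np) ℝ) * K * (fromCols (row3 0 G.D20 0) (row3 0 0 1) : Matrix ((Fin n ⊕ Fin ny) ⊕ Fin np) (Fin np ⊕ Fin np) ℝ) := by
  rw [D00cl, clBig_eq, toBlocks₁₁_blk33, toBlocks_fromBlocks₂₂]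

lemma D01cl_eq (G : Plant n np nd ne nu ny) (K) :
    D01cl G K = 0 + (fromRows (col3 0 G.D02 0) (col3 0 0 1) : Matrix (Fin np ⊕ Fin np) ((Fin n ⊕ Fin nu) ⊕ Fin np) ℝ) * K * (row3 0 G.D21 0 : Matrix ((Fin n ⊕ Fin ny) ⊕ Fin np) (Fin nd) ℝ) := by
  rw [D01cl, clBig_eq, toBlocks₁₂_blk33, toRows₂_fromRows]

lemma C1cl_eq (G : Plant n np nd ne nu ny) (K) :
    C1cl G K = fromCols G.C1 0 +
      (col3 0 G.D12 0 : Matrix (Fin ne) ((Fin n ⊕ Fin nu) ⊕ Fin np) ℝ) * K * (fromCols (row3 0 G.C2 0) (row3 1 0 0) : Matrix ((Fin n ⊕ Fin ny) ⊕ Fin np) (Fin n ⊕ Fin n) ℝ) := by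
  rw [C1cl, clBig_eq, toBlocks₂₁_blk33, toCols₁_fromCols]

lemma D10cl_eq (G : Plant n np nd ne nu ny) (K) :
    D10cl G K = fromCols G.D10 0 +
      (col3 0 G.D12 0 : Matrix (Fin ne) ((Fin n ⊕ Fin nu) ⊕ Fin np) ℝ) * K * (fromCols (row3 0 G.D20 0) (row3 0 0 1) : Matrix ((Fin n ⊕ Fin ny) ⊕ Fin np) (Fin np ⊕ Fin np) ℝ) := by
  rw [D10cl, clBig_eq, toBlocks₂₁_blk33, toCols₂_fromCols]

lemma D11cl_eq (G : Plant n np nd ne nu ny) (K) :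
    D11cl G K = 0 + (col3 0 G.D12 0 : Matrix (Fin ne) ((Fin n ⊕ Fin nu) ⊕ Fin np) ℝ) * K * (row3 0 G.D21 0 : Matrix ((Fin n ⊕ Fin ny) ⊕ Fin np) (Fin nd) ℝ) := by
  rw [D11cl, clBig_eq, toBlocks₂₂_blk33]

end clsec

/-- For invertible `V`, invertible symmetric `X`, and controller matrices `K`, the congruence
transformation of the closed-loop system by `diag(Z, W₁, I)` and `diag(V·Z, X·W₁, I)` equals
the affine expression of the closed-loop data in the transformed controller matrices `K̂`. -/
theorem statement13 (G : Plant n np nd ne nu ny)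
    (V : Matrix (Fin n ⊕ Fin n) (Fin n ⊕ Fin n) ℝ)
    (X : Matrix (Fin np ⊕ Fin np) (Fin np ⊕ Fin np) ℝ)
    (hV : IsUnit V) (hX : IsUnit X) (hXsym : X.IsHermitian)
    (Ak : Matrix (Fin n) (Fin n) ℝ) (Bk1 : Matrix (Fin n) (Fin ny) ℝ)
    (Bk0 : Matrix (Fin n) (Fin np) ℝ) (Ck1 : Matrix (Fin nu) (Fin n) ℝ)
    (Dk10 : Matrix (Fin nu) (Fin np) ℝ) (Ck0 : Matrix (Fin np) (Fin n) ℝ)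
    (Dk00 : Matrix (Fin np) (Fin np) ℝ) :
    blk33
      ((Zmat V)ᵀ * Acl G (ctrlMat Ak Bk1 Bk0 Ck1 Dk10 Ck0 Dk00) * (V * Zmat V))
      ((Zmat V)ᵀ * B0cl G (ctrlMat Ak Bk1 Bk0 Ck1 Dk10 Ck0 Dk00) * (X * W1mat X))
      ((Zmat V)ᵀ * B1cl G (ctrlMat Ak Bk1 Bk0 Ck1 Dk10 Ck0 Dk00))
      ((W1mat X)ᵀ * C0cl G (ctrlMat Ak Bk1 Bk0 Ck1 Dk10 Ck0 Dk00) * (V * Zmat V))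
      ((W1mat X)ᵀ * D00cl G (ctrlMat Ak Bk1 Bk0 Ck1 Dk10 Ck0 Dk00) * (X * W1mat X))
      ((W1mat X)ᵀ * D01cl G (ctrlMat Ak Bk1 Bk0 Ck1 Dk10 Ck0 Dk00))
      (C1cl G (ctrlMat Ak Bk1 Bk0 Ck1 Dk10 Ck0 Dk00) * (V * Zmat V))
      (D10cl G (ctrlMat Ak Bk1 Bk0 Ck1 Dk10 Ck0 Dk00) * (X * W1mat X))
      (D11cl G (ctrlMat Ak Bk1 Bk0 Ck1 Dk10 Ck0 Dk00)) =
    blk33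
      (fromBlocks (G.A * V.toBlocks₁₁) G.A 0 ((V⁻¹.toBlocks₁₁)ᵀ * G.A))
      (fromBlocks G.B0 (G.B0 * X.toBlocks₁₁) ((V⁻¹.toBlocks₁₁)ᵀ * G.B0) 0)
      (fromRows G.B1 ((V⁻¹.toBlocks₁₁)ᵀ * G.B1))
      (fromBlocks 0 (X⁻¹.toBlocks₁₁ * G.C0) (G.C0 * V.toBlocks₁₁) G.C0)
      (fromBlocks (X⁻¹.toBlocks₁₁ * G.D00) 0 G.D00 (G.D00 * X.toBlocks₁₁))
      0
      (fromCols (G.C1 * V.toBlocks₁₁) G.C1)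
      (fromCols G.D10 (G.D10 * X.toBlocks₁₁))
      0
    + row3 (fromRows (col3 0 G.B2 0) (col3 (1 : Matrix (Fin n) (Fin n) ℝ) 0 0))
        (fromRows (col3 0 0 (1 : Matrix (Fin np) (Fin np) ℝ)) (col3 0 G.D02 0))
        (col3 0 G.D12 0) *
      KhatOf G V X (ctrlMat Ak Bk1 Bk0 Ck1 Dk10 Ck0 Dk00) *
      col3 (fromCols (row3 1 0 0) (row3 0 G.C2 0))
        (fromCols (row3 0 G.D20 0) (row3 0 0 1))
        (row3 0 G.D21 0) := by
  simp only [cstar_mul_eq]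
  have hVV : V * V⁻¹ = 1 := mul_nonsing_inv V ((Matrix.isUnit_iff_isUnit_det V).mp hV)
  have hXX : X * X⁻¹ = 1 := mul_nonsing_inv X ((Matrix.isUnit_iff_isUnit_det X).mp hX)
  have one11 : (1 : Matrix (Fin n ⊕ Fin n) (Fin n ⊕ Fin n) ℝ).toBlocks₁₁ = 1 := by
    rw [← fromBlocks_one, toBlocks_fromBlocks₁₁]
  have one21 : (1 : Matrix (Fin n ⊕ Fin n) (Fin n ⊕ Fin n) ℝ).toBlocks₂₁ = 0 := by
    rw [← fromBlocks_one, toBlocks_fromBlocks₂₁]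
  have one11' : (1 : Matrix (Fin np ⊕ Fin np) (Fin np ⊕ Fin np) ℝ).toBlocks₁₁ = 1 := by
    rw [← fromBlocks_one, toBlocks_fromBlocks₁₁]
  have one21' : (1 : Matrix (Fin np ⊕ Fin np) (Fin np ⊕ Fin np) ℝ).toBlocks₂₁ = 0 := by
    rw [← fromBlocks_one, toBlocks_fromBlocks₂₁]
  have e11 : V.toBlocks₁₁ * (V⁻¹.toBlocks₁₁) + V.toBlocks₁₂ * (V⁻¹.toBlocks₂₁) = 1 := by
    rw [← mul_toBlocks₁₁, hVV, one11]
  have e21 : V.toBlocks₂₁ * (V⁻¹.toBlocks₁₁) + V.toBlocks₂₂ * (V⁻¹.toBlocks₂₁) = 0 := by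
    rw [← mul_toBlocks₂₁, hVV, one21]
  have f11 : X.toBlocks₁₁ * (X⁻¹.toBlocks₁₁) + X.toBlocks₁₂ * X⁻¹.toBlocks₂₁ = 1 := by
    rw [← mul_toBlocks₁₁, hXX, one11']
  have f21 : X.toBlocks₂₁ * (X⁻¹.toBlocks₁₁) + X.toBlocks₂₂ * X⁻¹.toBlocks₂₁ = 0 := by
    rw [← mul_toBlocks₂₁, hXX, one21']
  have hXt : Xᵀ = X := by
    have := hXsym.eq
    ext i j
    simpa using congrFun (congrFun this i) j
  have hXit : (X⁻¹)ᵀ = X⁻¹ := by rw [Matrix.transpose_nonsing_inv, hXt]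
  have hL : (X⁻¹.toBlocks₁₁)ᵀ = X⁻¹.toBlocks₁₁ := by rw [← toBlocks₁₁_transpose, hXit]
  have hL2 : X⁻¹.toBlocks₂₁ = (X⁻¹.toBlocks₁₂)ᵀ := by rw [← toBlocks₂₁_transpose, hXit]
  have hJ2 : X.toBlocks₂₁ = (X.toBlocks₁₂)ᵀ := by rw [← toBlocks₂₁_transpose, hXt]
  have hZT : (Zmat V)ᵀ = fromBlocks 1 0 (V⁻¹.toBlocks₁₁)ᵀ (V⁻¹.toBlocks₂₁)ᵀ := by
    rw [Zmat, fromBlocks_transpose]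
    simp
  have hW1T : (W1mat X)ᵀ = fromBlocks (X⁻¹.toBlocks₁₁) (X⁻¹.toBlocks₁₂) 1 0 := by
    rw [W1mat, fromBlocks_transpose]
    simp [hL]
  have hVZ : V * Zmat V = fromBlocks (V.toBlocks₁₁) 1 (V.toBlocks₂₁) 0 := by
    rw [Zmat]
    nth_rewrite 1 [← fromBlocks_toBlocks V]
    rw [fromBlocks_multiply]
    simp [e11, e21]
  have hXW : X * W1mat X = fromBlocks 1 (X.toBlocks₁₁) 0 ((X.toBlocks₁₂)ᵀ) := by
    rw [W1mat]
    nth_rewrite 1 [← fromBlocks_toBlocks X]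
    rw [fromBlocks_multiply, ← hL2, f11, f21]
    simp [hJ2]
  have bZ1 : fromBlocks 1 0 (V⁻¹.toBlocks₁₁)ᵀ (V⁻¹.toBlocks₂₁)ᵀ * ((fromRows (col3 0 G.B2 0) (col3 1 0 0) : Matrix (Fin n ⊕ Fin n) ((Fin n ⊕ Fin nu) ⊕ Fin np) ℝ)) = (fromRows (col3 0 G.B2 0) (col3 1 0 0) : Matrix (Fin n ⊕ Fin n) ((Fin n ⊕ Fin nu) ⊕ Fin np) ℝ) * (blk33 ((V⁻¹.toBlocks₂₁)ᵀ) ((V⁻¹.toBlocks₁₁)ᵀ * G.B2) 0 0 1 0 0 (X⁻¹.toBlocks₁₁ * G.D02) (X⁻¹.toBlocks₁₂) : Matrix ((Fin n ⊕ Fin nu) ⊕ Fin np) ((Fin n ⊕ Fin nu) ⊕ Fin np) ℝ) := by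
    simp [fromBlocks_multiply, fromBlocks_add, fromBlocks_mul_fromRows, fromCols_mul_fromBlocks, fromRows_mul_fromCols, fromCols_mul_fromRows, fromRows_mul, mul_fromCols, row3_mul', mul_col3', col3_mul_row3, row3_mul_col3, col3_mul_blk33, blk33_mul_row3, col3_add, row3_add, blk33_add, col3_zero, row3_zero, Matrix.mul_one, Matrix.one_mul, Matrix.mul_zero, Matrix.zero_mul, add_zero, zero_add, fromRows_zero, fromCols_zero, fromCols_fromRows_zero_right, fromCols_zero_fromRows, fromRows_fromCols_zero_right, fromRows_zero_fromCols]
  have bW2 : fromBlocks (X⁻¹.toBlocks₁₁) (X⁻¹.toBlocks₁₂) 1 0 * ((fromRows (col3 0 G.D02 0) (col3 0 0 1) : Matrix (Fin np ⊕ Fin np) ((Fin n ⊕ Fin nu) ⊕ Fin np) ℝ)) = (fromRows (col3 0 0 1) (col3 0 G.D02 0) : Matrix (Fin np ⊕ Fin np) ((Fin n ⊕ Fin nu) ⊕ Fin np) ℝ) * (blk33 ((V⁻¹.toBlocks₂₁)ᵀ) ((V⁻¹.toBlocks₁₁)ᵀ * G.B2) 0 0 1 0 0 (X⁻¹.toBlocks₁₁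 * G.D02) (X⁻¹.toBlocks₁₂) : Matrix ((Fin n ⊕ Fin nu) ⊕ Fin np) ((Fin n ⊕ Fin nu) ⊕ Fin np) ℝ) := by
    simp [fromBlocks_multiply, fromBlocks_add, fromBlocks_mul_fromRows, fromCols_mul_fromBlocks, fromRows_mul_fromCols, fromCols_mul_fromRows, fromRows_mul, mul_fromCols, row3_mul', mul_col3', col3_mul_row3, row3_mul_col3, col3_mul_blk33, blk33_mul_row3, col3_add, row3_add, blk33_add, col3_zero, row3_zero, Matrix.mul_one, Matrix.one_mul, Matrix.mul_zero, Matrix.zero_mul, add_zero, zero_add, fromRows_zero, fromCols_zero, fromCols_fromRows_zero_right, fromCols_zero_fromRows, fromRows_fromCols_zero_right, fromRows_zero_fromCols]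
  have b3 : (col3 0 G.D12 0 : Matrix (Fin ne) ((Fin n ⊕ Fin nu) ⊕ Fin np) ℝ) * (blk33 ((V⁻¹.toBlocks₂₁)ᵀ) ((V⁻¹.toBlocks₁₁)ᵀ * G.B2) 0 0 1 0 0 (X⁻¹.toBlocks₁₁ * G.D02) (X⁻¹.toBlocks₁₂) : Matrix ((Fin n ⊕ Fin nu) ⊕ Fin np) ((Fin n ⊕ Fin nu) ⊕ Fin np) ℝ) = (col3 0 G.D12 0 : Matrix (Fin ne) ((Fin n ⊕ Fin nu) ⊕ Fin np) ℝ) := by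
    simp [fromBlocks_multiply, fromBlocks_add, fromBlocks_mul_fromRows, fromCols_mul_fromBlocks, fromRows_mul_fromCols, fromCols_mul_fromRows, fromRows_mul, mul_fromCols, row3_mul', mul_col3', col3_mul_row3, row3_mul_col3, col3_mul_blk33, blk33_mul_row3, col3_add, row3_add, blk33_add, col3_zero, row3_zero, Matrix.mul_one, Matrix.one_mul, Matrix.mul_zero, Matrix.zero_mul, add_zero, zero_add, fromRows_zero, fromCols_zero, fromCols_fromRows_zero_right, fromCols_zero_fromRows, fromRows_fromCols_zero_right, fromRows_zero_fromCols]
  have cV1 : (fromCols (row3 0 G.C2 0) (row3 1 0 0) : Matrix ((Fin n ⊕ Fin ny) ⊕ Fin np) (Fin n ⊕ Fin n) ℝ) * (fromBlocks (V.toBlocks₁₁) 1 (V.toBlocks₂₁) 0) = (blk33 (V.toBlocks₂₁) 0 0 (G.C2 * V.toBlocks₁₁) 1 (G.D20 * X.toBlocks₁₁) 0 0 ((X.toBlocks₁₂)ᵀ) : Matrix ((Fin n ⊕ Fin ny) ⊕ Fin np) ((Fin n ⊕ Fin ny) ⊕ Fin np) ℝ) * ((fromCols (row3 1 0 0) (row3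 0 G.C2 0) : Matrix ((Fin n ⊕ Fin ny) ⊕ Fin np) (Fin n ⊕ Fin n) ℝ)) := by
    simp [fromBlocks_multiply, fromBlocks_add, fromBlocks_mul_fromRows, fromCols_mul_fromBlocks, fromRows_mul_fromCols, fromCols_mul_fromRows, fromRows_mul, mul_fromCols, row3_mul', mul_col3', col3_mul_row3, row3_mul_col3, col3_mul_blk33, blk33_mul_row3, col3_add, row3_add, blk33_add, col3_zero, row3_zero, Matrix.mul_one, Matrix.one_mul, Matrix.mul_zero, Matrix.zero_mul, add_zero, zero_add, fromRows_zero, fromCols_zero, fromCols_fromRows_zero_right, fromCols_zero_fromRows, fromRows_fromCols_zero_right, fromRows_zero_fromCols]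
  have cX2 : (fromCols (row3 0 G.D20 0) (row3 0 0 1) : Matrix ((Fin n ⊕ Fin ny) ⊕ Fin np) (Fin np ⊕ Fin np) ℝ) * (fromBlocks 1 (X.toBlocks₁₁) 0 ((X.toBlocks₁₂)ᵀ)) = (blk33 (V.toBlocks₂₁) 0 0 (G.C2 * V.toBlocks₁₁) 1 (G.D20 * X.toBlocks₁₁) 0 0 ((X.toBlocks₁₂)ᵀ) : Matrix ((Fin n ⊕ Fin ny) ⊕ Fin np) ((Fin n ⊕ Fin ny) ⊕ Fin np) ℝ) * ((fromCols (row3 0 G.D20 0) (row3 0 0 1) : Matrix ((Fin n ⊕ Fin ny) ⊕ Fin np) (Fin np ⊕ Fin np) ℝ)) := by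
    simp [fromBlocks_multiply, fromBlocks_add, fromBlocks_mul_fromRows, fromCols_mul_fromBlocks, fromRows_mul_fromCols, fromCols_mul_fromRows, fromRows_mul, mul_fromCols, row3_mul', mul_col3', col3_mul_row3, row3_mul_col3, col3_mul_blk33, blk33_mul_row3, col3_add, row3_add, blk33_add, col3_zero, row3_zero, Matrix.mul_one, Matrix.one_mul, Matrix.mul_zero, Matrix.zero_mul, add_zero, zero_add, fromRows_zero, fromCols_zero, fromCols_fromRows_zero_right, fromCols_zero_fromRows, fromRows_fromCols_zero_right, fromRows_zero_fromCols]
  have c3 : (blk33 (V.toBlocks₂₁) 0 0 (G.C2 * V.toBlocks₁₁) 1 (G.D20 * X.toBlocks₁₁) 0 0 ((X.toBlocks₁₂)ᵀ) : Matrix ((Fin n ⊕ Fin ny) ⊕ Fin np) ((Fin n ⊕ Fin ny) ⊕ Fin np) ℝ) * ((row3 0 G.D21 0 : Matrix ((Fin n ⊕ Fin ny) ⊕ Fin np) (Fin nd) ℝ)) = (row3 0 G.D21 0 : Matrix ((Fin n ⊕ Fin ny) ⊕ Fin np) (Fin nd) ℝ) := by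
    simp [fromBlocks_multiply, fromBlocks_add, fromBlocks_mul_fromRows, fromCols_mul_fromBlocks, fromRows_mul_fromCols, fromCols_mul_fromRows, fromRows_mul, mul_fromCols, row3_mul', mul_col3', col3_mul_row3, row3_mul_col3, col3_mul_blk33, blk33_mul_row3, col3_add, row3_add, blk33_add, col3_zero, row3_zero, Matrix.mul_one, Matrix.one_mul, Matrix.mul_zero, Matrix.zero_mul, add_zero, zero_add, fromRows_zero, fromCols_zero, fromCols_fromRows_zero_right, fromCols_zero_fromRows, fromRows_fromCols_zero_right, fromRows_zero_fromCols]
  have s11 : fromBlocks 1 0 (V⁻¹.toBlocks₁₁)ᵀ (V⁻¹.toBlocks₂₁)ᵀ * (fromBlocks G.A 0 0 0 : Matrix (Fin n ⊕ Fin n) (Fin n ⊕ Fin n) ℝ) * (fromBlocks (V.toBlocks₁₁) 1 (V.toBlocks₂₁) 0) =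
      fromBlocks (G.A * V.toBlocks₁₁) G.A 0 ((V⁻¹.toBlocks₁₁)ᵀ * G.A) + (fromRows (col3 0 G.B2 0) (col3 1 0 0) : Matrix (Fin n ⊕ Fin n) ((Fin n ⊕ Fin nu) ⊕ Fin np) ℝ) * (blk33 ((V⁻¹.toBlocks₁₁)ᵀ * G.A * V.toBlocks₁₁) 0 ((V⁻¹.toBlocks₁₁)ᵀ * G.B0 * X.toBlocks₁₁) 0 0 0 (X⁻¹.toBlocks₁₁ * G.C0 * V.toBlocks₁₁) 0 (X⁻¹.toBlocks₁₁ * G.D00 * X.toBlocks₁₁) : Matrix ((Fin n ⊕ Fin nu) ⊕ Fin np) ((Fin n ⊕ Fin ny) ⊕ Fin np) ℝ) * ((fromCols (row3 1 0 0) (row3 0 G.C2 0) : Matrix ((Fin n ⊕ Fin ny) ⊕ Fin np) (Fin n ⊕ Fin n) ℝ)) := by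
    simp [fromBlocks_multiply, fromBlocks_add, fromBlocks_mul_fromRows, fromCols_mul_fromBlocks, fromRows_mul_fromCols, fromCols_mul_fromRows, fromRows_mul, mul_fromCols, row3_mul', mul_col3', col3_mul_row3, row3_mul_col3, col3_mul_blk33, blk33_mul_row3, col3_add, row3_add, blk33_add, col3_zero, row3_zero, Matrix.mul_one, Matrix.one_mul, Matrix.mul_zero, Matrix.zero_mul, add_zero, zero_add, fromRows_zero, fromCols_zero, fromCols_fromRows_zero_right, fromCols_zero_fromRows, fromRows_fromCols_zero_right, fromRows_zero_fromCols]
  have s12 : fromBlocks 1 0 (V⁻¹.toBlocks₁₁)ᵀ (V⁻¹.toBlocks₂₁)ᵀ * (fromBlocks G.B0 0 0 0 : Matrix (Fin n ⊕ Fin n) (Fin np ⊕ Fin np) ℝ) * (fromBlocks 1 (X.toBlocks₁₁) 0 ((X.toBlocks₁₂)ᵀ)) =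
      fromBlocks G.B0 (G.B0 * X.toBlocks₁₁) ((V⁻¹.toBlocks₁₁)ᵀ * G.B0) 0 + (fromRows (col3 0 G.B2 0) (col3 1 0 0) : Matrix (Fin n ⊕ Fin n) ((Fin n ⊕ Fin nu) ⊕ Fin np) ℝ) * (blk33 ((V⁻¹.toBlocks₁₁)ᵀ * G.A * V.toBlocks₁₁) 0 ((V⁻¹.toBlocks₁₁)ᵀ * G.B0 * X.toBlocks₁₁) 0 0 0 (X⁻¹.toBlocks₁₁ * G.C0 * V.toBlocks₁₁) 0 (X⁻¹.toBlocks₁₁ * G.D00 * X.toBlocks₁₁) : Matrix ((Fin n ⊕ Fin nu) ⊕ Fin np) ((Fin n ⊕ Fin ny) ⊕ Fin np) ℝ) * ((fromCols (row3 0 G.D20 0) (row3 0 0 1) : Matrix ((Fin n ⊕ Fin ny) ⊕ Fin np) (Fin np ⊕ Fin np) ℝ)) := by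
    simp [fromBlocks_multiply, fromBlocks_add, fromBlocks_mul_fromRows, fromCols_mul_fromBlocks, fromRows_mul_fromCols, fromCols_mul_fromRows, fromRows_mul, mul_fromCols, row3_mul', mul_col3', col3_mul_row3, row3_mul_col3, col3_mul_blk33, blk33_mul_row3, col3_add, row3_add, blk33_add, col3_zero, row3_zero, Matrix.mul_one, Matrix.one_mul, Matrix.mul_zero, Matrix.zero_mul, add_zero, zero_add, fromRows_zero, fromCols_zero, fromCols_fromRows_zero_right, fromCols_zero_fromRows, fromRows_fromCols_zero_right, fromRows_zero_fromCols]
  have s13 : fromBlocks 1 0 (V⁻¹.toBlocks₁₁)ᵀ (V⁻¹.toBlocks₂₁)ᵀ * (fromRows G.B1 0 : Matrix (Fin n ⊕ Fin n) (Fin nd) ℝ) =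
      fromRows G.B1 ((V⁻¹.toBlocks₁₁)ᵀ * G.B1) + (fromRows (col3 0 G.B2 0) (col3 1 0 0) : Matrix (Fin n ⊕ Fin n) ((Fin n ⊕ Fin nu) ⊕ Fin np) ℝ) * (blk33 ((V⁻¹.toBlocks₁₁)ᵀ * G.A * V.toBlocks₁₁) 0 ((V⁻¹.toBlocks₁₁)ᵀ * G.B0 * X.toBlocks₁₁) 0 0 0 (X⁻¹.toBlocks₁₁ * G.C0 * V.toBlocks₁₁) 0 (X⁻¹.toBlocks₁₁ * G.D00 * X.toBlocks₁₁) : Matrix ((Fin n ⊕ Fin nu) ⊕ Fin np) ((Fin n ⊕ Fin ny) ⊕ Fin np) ℝ) * ((row3 0 G.D21 0 : Matrix ((Fin n ⊕ Fin ny) ⊕ Fin np) (Fin nd) ℝ)) := by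
    simp [fromBlocks_multiply, fromBlocks_add, fromBlocks_mul_fromRows, fromCols_mul_fromBlocks, fromRows_mul_fromCols, fromCols_mul_fromRows, fromRows_mul, mul_fromCols, row3_mul', mul_col3', col3_mul_row3, row3_mul_col3, col3_mul_blk33, blk33_mul_row3, col3_add, row3_add, blk33_add, col3_zero, row3_zero, Matrix.mul_one, Matrix.one_mul, Matrix.mul_zero, Matrix.zero_mul, add_zero, zero_add, fromRows_zero, fromCols_zero, fromCols_fromRows_zero_right, fromCols_zero_fromRows, fromRows_fromCols_zero_right, fromRows_zero_fromCols]
  have s21 : fromBlocks (X⁻¹.toBlocks₁₁) (X⁻¹.toBlocks₁₂) 1 0 * (fromBlocks G.C0 0 0 0 : Matrix (Fin np ⊕ Fin np) (Fin n ⊕ Fin n) ℝ) * (fromBlocks (V.toBlocks₁₁) 1 (V.toBlocks₂₁) 0) =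
      fromBlocks 0 (X⁻¹.toBlocks₁₁ * G.C0) (G.C0 * V.toBlocks₁₁) G.C0 + (fromRows (col3 0 0 1) (col3 0 G.D02 0) : Matrix (Fin np ⊕ Fin np) ((Fin n ⊕ Fin nu) ⊕ Fin np) ℝ) * (blk33 ((V⁻¹.toBlocks₁₁)ᵀ * G.A * V.toBlocks₁₁) 0 ((V⁻¹.toBlocks₁₁)ᵀ * G.B0 * X.toBlocks₁₁) 0 0 0 (X⁻¹.toBlocks₁₁ * G.C0 * V.toBlocks₁₁) 0 (X⁻¹.toBlocks₁₁ * G.D00 * X.toBlocks₁₁) : Matrix ((Fin n ⊕ Fin nu) ⊕ Fin np) ((Fin n ⊕ Fin ny) ⊕ Fin np) ℝ) * ((fromCols (row3 1 0 0) (row3 0 G.C2 0) : Matrix ((Fin n ⊕ Fin ny) ⊕ Fin np) (Fin n ⊕ Fin n) ℝ)) := by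
    simp [fromBlocks_multiply, fromBlocks_add, fromBlocks_mul_fromRows, fromCols_mul_fromBlocks, fromRows_mul_fromCols, fromCols_mul_fromRows, fromRows_mul, mul_fromCols, row3_mul', mul_col3', col3_mul_row3, row3_mul_col3, col3_mul_blk33, blk33_mul_row3, col3_add, row3_add, blk33_add, col3_zero, row3_zero, Matrix.mul_one, Matrix.one_mul, Matrix.mul_zero, Matrix.zero_mul, add_zero, zero_add, fromRows_zero, fromCols_zero, fromCols_fromRows_zero_right, fromCols_zero_fromRows, fromRows_fromCols_zero_right, fromRows_zero_fromCols]
  have s22 : fromBlocks (X⁻¹.toBlocks₁₁) (X⁻¹.toBlocks₁₂) 1 0 * (fromBlocks G.D00 0 0 0 : Matrix (Fin np ⊕ Fin np) (Fin np ⊕ Fin np) ℝ) * (fromBlocks 1 (X.toBlocks₁₁) 0 ((X.toBlocks₁₂)ᵀ)) =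
      fromBlocks (X⁻¹.toBlocks₁₁ * G.D00) 0 G.D00 (G.D00 * X.toBlocks₁₁) + (fromRows (col3 0 0 1) (col3 0 G.D02 0) : Matrix (Fin np ⊕ Fin np) ((Fin n ⊕ Fin nu) ⊕ Fin np) ℝ) * (blk33 ((V⁻¹.toBlocks₁₁)ᵀ * G.A * V.toBlocks₁₁) 0 ((V⁻¹.toBlocks₁₁)ᵀ * G.B0 * X.toBlocks₁₁) 0 0 0 (X⁻¹.toBlocks₁₁ * G.C0 * V.toBlocks₁₁) 0 (X⁻¹.toBlocks₁₁ * G.D00 * X.toBlocks₁₁) : Matrix ((Fin n ⊕ Fin nu) ⊕ Fin np) ((Fin n ⊕ Fin ny) ⊕ Fin np) ℝ) * ((fromCols (row3 0 G.D20 0) (row3 0 0 1) : Matrix ((Fin n ⊕ Fin ny) ⊕ Fin np) (Fin np ⊕ Fin np) ℝ)) := by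
    simp [fromBlocks_multiply, fromBlocks_add, fromBlocks_mul_fromRows, fromCols_mul_fromBlocks, fromRows_mul_fromCols, fromCols_mul_fromRows, fromRows_mul, mul_fromCols, row3_mul', mul_col3', col3_mul_row3, row3_mul_col3, col3_mul_blk33, blk33_mul_row3, col3_add, row3_add, blk33_add, col3_zero, row3_zero, Matrix.mul_one, Matrix.one_mul, Matrix.mul_zero, Matrix.zero_mul, add_zero, zero_add, fromRows_zero, fromCols_zero, fromCols_fromRows_zero_right, fromCols_zero_fromRows, fromRows_fromCols_zero_right, fromRows_zero_fromCols]
  have s23 : fromBlocks (X⁻¹.toBlocks₁₁) (X⁻¹.toBlocks₁₂) 1 0 * (0 : Matrix (Fin np ⊕ Fin np) (Fin nd) ℝ) =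
      0 + (fromRows (col3 0 0 1) (col3 0 G.D02 0) : Matrix (Fin np ⊕ Fin np) ((Fin n ⊕ Fin nu) ⊕ Fin np) ℝ) * (blk33 ((V⁻¹.toBlocks₁₁)ᵀ * G.A * V.toBlocks₁₁) 0 ((V⁻¹.toBlocks₁₁)ᵀ * G.B0 * X.toBlocks₁₁) 0 0 0 (X⁻¹.toBlocks₁₁ * G.C0 * V.toBlocks₁₁) 0 (X⁻¹.toBlocks₁₁ * G.D00 * X.toBlocks₁₁) : Matrix ((Fin n ⊕ Fin nu) ⊕ Fin np) ((Fin n ⊕ Fin ny) ⊕ Fin np) ℝ) * ((row3 0 G.D21 0 : Matrix ((Fin n ⊕ Fin ny) ⊕ Fin np) (Fin nd) ℝ)) := by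
    simp [fromBlocks_multiply, fromBlocks_add, fromBlocks_mul_fromRows, fromCols_mul_fromBlocks, fromRows_mul_fromCols, fromCols_mul_fromRows, fromRows_mul, mul_fromCols, row3_mul', mul_col3', col3_mul_row3, row3_mul_col3, col3_mul_blk33, blk33_mul_row3, col3_add, row3_add, blk33_add, col3_zero, row3_zero, Matrix.mul_one, Matrix.one_mul, Matrix.mul_zero, Matrix.zero_mul, add_zero, zero_add, fromRows_zero, fromCols_zero, fromCols_fromRows_zero_right, fromCols_zero_fromRows, fromRows_fromCols_zero_right, fromRows_zero_fromCols]
  have s31 : (fromCols G.C1 0 : Matrix (Fin ne) (Fin n ⊕ Fin n) ℝ) * (fromBlocks (V.toBlocks₁₁) 1 (V.toBlocks₂₁) 0) =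
      fromCols (G.C1 * V.toBlocks₁₁) G.C1 + (col3 0 G.D12 0 : Matrix (Fin ne) ((Fin n ⊕ Fin nu) ⊕ Fin np) ℝ) * (blk33 ((V⁻¹.toBlocks₁₁)ᵀ * G.A * V.toBlocks₁₁) 0 ((V⁻¹.toBlocks₁₁)ᵀ * G.B0 * X.toBlocks₁₁) 0 0 0 (X⁻¹.toBlocks₁₁ * G.C0 * V.toBlocks₁₁) 0 (X⁻¹.toBlocks₁₁ * G.D00 * X.toBlocks₁₁) : Matrix ((Fin n ⊕ Fin nu) ⊕ Fin np) ((Fin n ⊕ Fin ny) ⊕ Fin np) ℝ) * ((fromCols (row3 1 0 0) (row3 0 G.C2 0) : Matrix ((Fin n ⊕ Fin ny) ⊕ Fin np) (Fin n ⊕ Fin n) ℝ)) := by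
    simp [fromBlocks_multiply, fromBlocks_add, fromBlocks_mul_fromRows, fromCols_mul_fromBlocks, fromRows_mul_fromCols, fromCols_mul_fromRows, fromRows_mul, mul_fromCols, row3_mul', mul_col3', col3_mul_row3, row3_mul_col3, col3_mul_blk33, blk33_mul_row3, col3_add, row3_add, blk33_add, col3_zero, row3_zero, Matrix.mul_one, Matrix.one_mul, Matrix.mul_zero, Matrix.zero_mul, add_zero, zero_add, fromRows_zero, fromCols_zero, fromCols_fromRows_zero_right, fromCols_zero_fromRows, fromRows_fromCols_zero_right, fromRows_zero_fromCols]
  have s32 : (fromCols G.D10 0 : Matrix (Fin ne) (Fin np ⊕ Fin np) ℝ) * (fromBlocks 1 (X.toBlocks₁₁) 0 ((X.toBlocks₁₂)ᵀ)) =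
      fromCols G.D10 (G.D10 * X.toBlocks₁₁) + (col3 0 G.D12 0 : Matrix (Fin ne) ((Fin n ⊕ Fin nu) ⊕ Fin np) ℝ) * (blk33 ((V⁻¹.toBlocks₁₁)ᵀ * G.A * V.toBlocks₁₁) 0 ((V⁻¹.toBlocks₁₁)ᵀ * G.B0 * X.toBlocks₁₁) 0 0 0 (X⁻¹.toBlocks₁₁ * G.C0 * V.toBlocks₁₁) 0 (X⁻¹.toBlocks₁₁ * G.D00 * X.toBlocks₁₁) : Matrix ((Fin n ⊕ Fin nu) ⊕ Fin np) ((Fin n ⊕ Fin ny) ⊕ Fin np) ℝ) * ((fromCols (row3 0 G.D20 0) (row3 0 0 1) : Matrix ((Fin n ⊕ Fin ny) ⊕ Fin np) (Fin np ⊕ Fin np) ℝ)) := by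
    simp [fromBlocks_multiply, fromBlocks_add, fromBlocks_mul_fromRows, fromCols_mul_fromBlocks, fromRows_mul_fromCols, fromCols_mul_fromRows, fromRows_mul, mul_fromCols, row3_mul', mul_col3', col3_mul_row3, row3_mul_col3, col3_mul_blk33, blk33_mul_row3, col3_add, row3_add, blk33_add, col3_zero, row3_zero, Matrix.mul_one, Matrix.one_mul, Matrix.mul_zero, Matrix.zero_mul, add_zero, zero_add, fromRows_zero, fromCols_zero, fromCols_fromRows_zero_right, fromCols_zero_fromRows, fromRows_fromCols_zero_right, fromRows_zero_fromCols]
  have s33 : (0 : Matrix (Fin ne) (Fin nd) ℝ) = 0 + (col3 0 G.D12 0 : Matrix (Fin ne) ((Fin n ⊕ Fin nu) ⊕ Fin np) ℝ) * (blk33 ((V⁻¹.toBlocks₁₁)ᵀ * G.A * V.toBlocks₁₁) 0 ((V⁻¹.toBlocks₁₁)ᵀ * G.B0 * X.toBlocks₁₁) 0 0 0 (X⁻¹.toBlocks₁₁ * G.C0 * V.toBlocks₁₁) 0 (X⁻¹.toBlocks₁₁ * G.D00 * X.toBlocks₁₁) : Matrix ((Fin n ⊕ Fin nu) ⊕ Fin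 np) ((Fin n ⊕ Fin ny) ⊕ Fin np) ℝ) * ((row3 0 G.D21 0 : Matrix ((Fin n ⊕ Fin ny) ⊕ Fin np) (Fin nd) ℝ)) := by
    simp [fromBlocks_multiply, fromBlocks_add, fromBlocks_mul_fromRows, fromCols_mul_fromBlocks, fromRows_mul_fromCols, fromCols_mul_fromRows, fromRows_mul, mul_fromCols, row3_mul', mul_col3', col3_mul_row3, row3_mul_col3, col3_mul_blk33, blk33_mul_row3, col3_add, row3_add, blk33_add, col3_zero, row3_zero, Matrix.mul_one, Matrix.one_mul, Matrix.mul_zero, Matrix.zero_mul, add_zero, zero_add, fromRows_zero, fromCols_zero, fromCols_fromRows_zero_right, fromCols_zero_fromRows, fromRows_fromCols_zero_right, fromRows_zero_fromCols]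
  rw [Acl_eq, B0cl_eq, B1cl_eq, C0cl_eq, D00cl_eq, D01cl_eq, C1cl_eq, D10cl_eq, D11cl_eq,
    KhatOf, hZT, hW1T, hVZ, hXW]
  simp only [sandwichTU]
  simp only [sandwichT]
  simp only [sandwichU]
  rw [bZ1, bW2, cV1, cX2]
  conv_rhs => rw [row3_mul', row3_mul_col3, row3_mul', row3_mul', mul_col3', row3_mul_col3,
    blk33_add, blk33_add]
  rw [b3, c3]
  refine blk33_congr ?_ ?_ ?_ ?_ ?_ ?_ ?_ ?_ ?_
  · rw [s11, add_assoc]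
  · rw [s12, add_assoc]
  · rw [s13, add_assoc]
  · rw [s21, add_assoc]
  · rw [s22, add_assoc]
  · rw [s23, add_assoc]
  · rw [s31, add_assoc]
  · rw [s32, add_assoc]
  · conv_lhs => rw [s33]
    rw [add_assoc]
end
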